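/- arXiv:1106.3952 — 5 statements merged into one kernel-verified Lean document; each statement's English description precedes it below -/
import Mathlib

section
/- For positive integers m and n, the sum of divisors d of n with d ≡ m (mod 2m) equals m times the sum of odd divisors of n/m (interpreted as 0 if m does not divide n). -/
/-- σ(n) = sum of divisors of n (0 if n = 0). -/
def sigma1 (n : ℕ) : ℤ := ∑ d ∈ n.divisors, (d : ℤ)

/-- σ(n/m), interpreted as 0 when m does not divide n. -/
def sigmaDiv (n m : ℕ) : ℤ := if m ∣ n then sigma1 (n / m) else 0

/-- σ*(n) = sum of divisors d of n with n/d odd. -/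
def sigmaStar (n : ℕ) : ℤ := ∑ d ∈ n.divisors.filter (fun d => Odd (n / d)), (d : ℤ)

/-- σ*(n/m), interpreted as 0 when m does not divide n. -/
def sigmaStarDiv (n m : ℕ) : ℤ := if m ∣ n then sigmaStar (n / m) else 0

theorem sigma_m_mod_two_m (m n : ℕ) (hm : 0 < m) (hn : 0 < n) :
    (∑ d ∈ n.divisors.filter (fun d => d % (2 * m) = m), (d : ℤ)) =
      m * (if m ∣ n then ∑ d ∈ (n / m).divisors.filter (fun d => Odd d), (d : ℤ) else 0) := by
  have hmd : ∀ d : ℕ, d % (2 * m) = m → m ∣ d := by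
    intro d hd
    exact (Nat.dvd_mod_iff (dvd_mul_left m 2)).mp (by rw [hd])
  by_cases h : m ∣ n
  · rw [if_pos h, Finset.mul_sum]
    refine Finset.sum_nbij' (fun d => d / m) (fun e => m * e) ?_ ?_ ?_ ?_ ?_
    · intro d hd
      simp only [Finset.mem_filter, Nat.mem_divisors] at hd ⊢
      obtain ⟨⟨hdn, hn0⟩, hmod⟩ := hd
      obtain ⟨k, rfl⟩ := hmd _ hmod
      have hdm : m * k / m = k := Nat.mul_div_cancel_left k hm
      obtain ⟨c, hc⟩ := hdn
      have hnm : n / m = k * c := by rw [hc, mul_assoc, Nat.mul_div_cancel_left _ hm]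
      refine ⟨⟨?_, ?_⟩, ?_⟩
      · rw [hdm, hnm]; exact dvd_mul_right k c
      · exact Nat.ne_of_gt (Nat.div_pos (Nat.le_of_dvd hn h) hm)
      · rw [hdm]
        rcases Nat.even_or_odd k with he | ho
        · exfalso
          obtain ⟨j, rfl⟩ := he
          have : m * (j + j) % (2 * m) = 0 := by
            rw [show m * (j + j) = 2 * m * j by ring, Nat.mul_mod_right]
          omega
        · exact ho
    · intro e he
      simp only [Finset.mem_filter, Nat.mem_divisors] at he ⊢
      obtain ⟨⟨hednm, hnm0⟩, hodd⟩ := he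
      obtain ⟨j, rfl⟩ := hodd
      constructor
      · constructor
        · calc m * (2 * j + 1) ∣ m * (n / m) := Nat.mul_dvd_mul_left m hednm
            _ = n := Nat.mul_div_cancel' h
        · exact Nat.ne_of_gt hn
      · rw [show m * (2 * j + 1) = m + 2 * m * j by ring, Nat.add_mul_mod_self_left]
        exact Nat.mod_eq_of_lt (by omega)
    · intro d hd
      simp only [Finset.mem_filter, Nat.mem_divisors] at hd
      exact Nat.mul_div_cancel' (hmd _ hd.2)
    · intro e _
      exact Nat.mul_div_cancel_left e hm
    · intro d hd
      simp only [Finset.mem_filter, Nat.mem_divisors] at hd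
      rw [← Nat.cast_mul]
      exact_mod_cast (Nat.mul_div_cancel' (hmd _ hd.2)).symm
  · rw [if_neg h, mul_zero]
    rw [Finset.filter_eq_empty_iff.mpr ?_, Finset.sum_empty]
    intro d hd hdm
    exact h (dvd_trans (hmd d hdm) (Nat.mem_divisors.mp hd).1)
end

section
/- For all positive integers n and k, n·r_k(n) = 2k·(σ*(n) - 4σ*(n/2) + ∑_{j=1}^{n-1} r_k(j)·(σ*(n-j) - 4σ*((n-j)/2))), where σ*(q) = 0 when q is not a positive integer. -/
/-- Number of representations of n as an ordered sum of k squares of integers. -/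
noncomputable def rSq (k n : ℕ) : ℕ := Nat.card {x : Fin k → ℤ // ∑ i, (x i) ^ 2 = (n : ℤ)}

open Finset

noncomputable section
open scoped Classical

/-- sign (-1)^(d-1) -/
def eps (d : ℤ) : ℤ := if d % 2 = 0 then -1 else 1

lemma eps_odd {d : ℤ} (h : d % 2 = 1) : eps d = 1 := by simp [eps]; omega
lemma eps_even {d : ℤ} (h : d % 2 = 0) : eps d = -1 := by simp [eps, h]

/-- ambient box for triples -/
def bx (n : ℤ) : Finset (ℤ × ℤ × ℤ) :=
  (Finset.Icc (-(3*n)) (3*n)) ×ˢ (Finset.Icc (-(3*n)) (3*n)) ×ˢ (Finset.Icc (-(3*n)) (3*n))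

lemma mem_bx {n a d e : ℤ} (hn : 1 ≤ n) (h : a^2 + d*e = n) (hd : 1 ≤ d)
    (he : 0 ≤ e) (hdb : d ≤ 3*n) : (a, d, e) ∈ bx n := by
  have hde : 0 ≤ d * e := mul_nonneg (by linarith) he
  have ha2 : a^2 ≤ n := by linarith
  have h1 : a ≤ n := by nlinarith [sq_nonneg (a - 1)]
  have h2 : -n ≤ a := by nlinarith [sq_nonneg (a + 1)]
  have h3 : e ≤ n := by nlinarith
  unfold bx
  simp only [Finset.mem_product, Finset.mem_Icc]
  refine ⟨⟨by linarith, by linarith⟩, ⟨by linarith, hdb⟩, by linarith, by linarith⟩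

/-- σ̃ as a finite sum over divisor pairs -/
def StF (v : ℤ) : ℤ :=
  ∑ p ∈ ((Finset.Icc 1 v) ×ˢ (Finset.Icc 1 v)).filter
      (fun p => p.1 * p.2 = v ∧ p.2 % 2 = 1), eps p.1 * p.1

lemma StF_nonpos {v : ℤ} (hv : v ≤ 0) : StF v = 0 := by
  rw [StF, Finset.Icc_eq_empty (by omega), Finset.empty_product, Finset.filter_empty,
    Finset.sum_empty]

section Star
variable (n : ℤ)

def PT (t : ℤ × ℤ × ℤ) : Prop :=
  t.1^2 + t.2.1 * t.2.2 = n ∧ 1 ≤ t.2.1 ∧ 1 ≤ t.2.2 ∧ t.2.2 % 2 = 1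

def PP0 (t : ℤ × ℤ × ℤ) : Prop :=
  t.1^2 + t.2.1 * t.2.2 = n ∧ 1 ≤ t.2.1 ∧ 0 ≤ t.2.2 ∧ (t.2.1 + t.2.2) % 2 = 1 ∧
    1 ≤ t.2.2 + 2*t.1 - t.2.1

def PQ (t : ℤ × ℤ × ℤ) : Prop :=
  t.1^2 + t.2.1 * t.2.2 = n ∧ 1 ≤ t.2.1 ∧ 1 ≤ t.2.2 ∧ t.2.2 % 2 = 1 ∧
    1 ≤ t.2.1 + 2*t.1 - t.2.2

def PWall (t : ℤ × ℤ × ℤ) : Prop :=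
  t.1^2 + t.2.1 * t.2.2 = n ∧ 1 ≤ t.2.1 ∧ 1 ≤ t.2.2 ∧ t.2.1 % 2 = 0 ∧ t.2.2 % 2 = 1

def sT : Finset (ℤ × ℤ × ℤ) := (bx n).filter (fun t => PT n t)
def sU : Finset (ℤ × ℤ × ℤ) := (bx n).filter (fun t => PT n t ∧ 1 ≤ t.2.1 - 2*t.1 - t.2.2)
def sUc : Finset (ℤ × ℤ × ℤ) := (bx n).filter (fun t => PT n t ∧ ¬ 1 ≤ t.2.1 - 2*t.1 - t.2.2)
def sV : Finset (ℤ × ℤ × ℤ) := (bx n).filter (fun t => PT n t ∧ 1 ≤ t.2.1 + 2*t.1 - t.2.2)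
def sVc : Finset (ℤ × ℤ × ℤ) := (bx n).filter (fun t => PT n t ∧ ¬ 1 ≤ t.2.1 + 2*t.1 - t.2.2)
def sP0 : Finset (ℤ × ℤ × ℤ) := (bx n).filter (fun t => PP0 n t)
def sP0z : Finset (ℤ × ℤ × ℤ) := (bx n).filter (fun t => PP0 n t ∧ t.2.2 = 0)
def sPP : Finset (ℤ × ℤ × ℤ) := (bx n).filter (fun t => PP0 n t ∧ ¬ t.2.2 = 0)
def sPPodd : Finset (ℤ × ℤ × ℤ) :=
  (bx n).filter (fun t => (PP0 n t ∧ ¬ t.2.2 = 0) ∧ t.2.1 % 2 = 1)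
def sPPev : Finset (ℤ × ℤ × ℤ) :=
  (bx n).filter (fun t => (PP0 n t ∧ ¬ t.2.2 = 0) ∧ ¬ t.2.1 % 2 = 1)
def sQ : Finset (ℤ × ℤ × ℤ) := (bx n).filter (fun t => PQ n t)
def sQev : Finset (ℤ × ℤ × ℤ) := (bx n).filter (fun t => PQ n t ∧ t.2.1 % 2 = 0)
def sQodd : Finset (ℤ × ℤ × ℤ) := (bx n).filter (fun t => PQ n t ∧ ¬ t.2.1 % 2 = 0)
def sWall : Finset (ℤ × ℤ × ℤ) := (bx n).filter (fun t => PWall n t)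
def sW1 : Finset (ℤ × ℤ × ℤ) := (bx n).filter (fun t => PWall n t ∧ 1 ≤ t.2.1 + 2*t.1 - t.2.2)
def sW1c : Finset (ℤ × ℤ × ℤ) :=
  (bx n).filter (fun t => PWall n t ∧ ¬ 1 ≤ t.2.1 + 2*t.1 - t.2.2)
def sW2 : Finset (ℤ × ℤ × ℤ) := (bx n).filter (fun t => PWall n t ∧ 1 ≤ t.2.2 + 2*t.1 - t.2.1)

variable {n}

lemma split_T : ∑ t ∈ sT n, eps t.2.1 * t.2.1
    = (∑ t ∈ sU n, eps t.2.1 * t.2.1) + ∑ t ∈ sUc n, eps t.2.1 * t.2.1 := by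
  rw [sT, sU, sUc, ← Finset.sum_filter_add_sum_filter_not ((bx n).filter (fun t => PT n t))
    (fun t => 1 ≤ t.2.1 - 2*t.1 - t.2.2), Finset.filter_filter, Finset.filter_filter]

lemma split_T' : ∑ t ∈ sT n, eps t.2.1 * t.2.1
    = (∑ t ∈ sV n, eps t.2.1 * t.2.1) + ∑ t ∈ sVc n, eps t.2.1 * t.2.1 := by
  rw [sT, sV, sVc, ← Finset.sum_filter_add_sum_filter_not ((bx n).filter (fun t => PT n t))
    (fun t => 1 ≤ t.2.1 + 2*t.1 - t.2.2), Finset.filter_filter, Finset.filter_filter]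

lemma split_P0 : ∑ t ∈ sP0 n, eps t.2.1 * t.2.1
    = (∑ t ∈ sP0z n, eps t.2.1 * t.2.1) + ∑ t ∈ sPP n, eps t.2.1 * t.2.1 := by
  rw [sP0, sP0z, sPP, ← Finset.sum_filter_add_sum_filter_not ((bx n).filter (fun t => PP0 n t))
    (fun t => t.2.2 = 0), Finset.filter_filter, Finset.filter_filter]

lemma split_PP : ∑ t ∈ sPP n, eps t.2.1 * t.2.1
    = (∑ t ∈ sPPodd n, eps t.2.1 * t.2.1) + ∑ t ∈ sPPev n, eps t.2.1 * t.2.1 := by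
  rw [sPP, sPPodd, sPPev, ← Finset.sum_filter_add_sum_filter_not
    ((bx n).filter (fun t => PP0 n t ∧ ¬ t.2.2 = 0))
    (fun t => t.2.1 % 2 = 1), Finset.filter_filter, Finset.filter_filter]

lemma split_Q : ∑ t ∈ sQ n, -eps t.2.1 * (2*t.1 - t.2.2)
    = (∑ t ∈ sQev n, -eps t.2.1 * (2*t.1 - t.2.2))
      + ∑ t ∈ sQodd n, -eps t.2.1 * (2*t.1 - t.2.2) := by
  rw [sQ, sQev, sQodd, ← Finset.sum_filter_add_sum_filter_not ((bx n).filter (fun t => PQ n t))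
    (fun t => t.2.1 % 2 = 0), Finset.filter_filter, Finset.filter_filter]

lemma split_Wall : ∑ t ∈ sWall n, t.1 = (∑ t ∈ sW1 n, t.1) + ∑ t ∈ sW1c n, t.1 := by
  rw [sWall, sW1, sW1c, ← Finset.sum_filter_add_sum_filter_not
    ((bx n).filter (fun t => PWall n t)) (fun t => 1 ≤ t.2.1 + 2*t.1 - t.2.2),
    Finset.filter_filter, Finset.filter_filter]

lemma L_phi (hn : 1 ≤ n) :
    ∑ t ∈ sU n, eps t.2.1 * t.2.1
    = ∑ t ∈ sV n, -(eps t.2.1 * (t.2.1 + 2*t.1 - t.2.2)) := by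
  refine Finset.sum_nbij' (i := fun t => (t.1 + t.2.2, t.2.1 - 2*t.1 - t.2.2, t.2.2))
    (j := fun t => (t.1 - t.2.2, t.2.1 + 2*t.1 - t.2.2, t.2.2)) ?_ ?_ ?_ ?_ ?_
  · rintro ⟨a, d, e⟩ ht
    simp only [sU, sV, Finset.mem_filter] at ht ⊢; simp only [PT] at ht ⊢
    obtain ⟨-, ⟨hq, hd, he, hp⟩, hc⟩ := ht
    refine ⟨mem_bx hn (by linear_combination hq) (by omega) (by omega) ?_,
      ⟨by linear_combination hq, by omega, by omega, by omega⟩, by omega⟩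
    · nlinarith [sq_nonneg (a + e)]
  · rintro ⟨a, d, e⟩ ht
    simp only [sU, sV, Finset.mem_filter] at ht ⊢; simp only [PT] at ht ⊢
    obtain ⟨-, ⟨hq, hd, he, hp⟩, hc⟩ := ht
    refine ⟨mem_bx hn (by linear_combination hq) (by omega) (by omega) ?_,
      ⟨by linear_combination hq, by omega, by omega, by omega⟩, by omega⟩
    · nlinarith [sq_nonneg (a - e)]
  · rintro ⟨a, d, e⟩ _; simp only [Prod.mk.injEq]; exact ⟨by ring, by ring, trivial⟩
  · rintro ⟨a, d, e⟩ _; simp only [Prod.mk.injEq]; exact ⟨by ring, by ring, trivial⟩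
  · rintro ⟨a, d, e⟩ ht
    simp only [sU, Finset.mem_filter] at ht; simp only [PT] at ht
    obtain ⟨-, ⟨hq, hd, he, hp⟩, hc⟩ := ht
    rcases Int.emod_two_eq_zero_or_one d with h2 | h2
    · rw [eps_even h2, eps_odd (d := d - 2*a - e) (by omega)]; ring
    · rw [eps_odd h2, eps_even (d := d - 2*a - e) (by omega)]; ring

lemma L_nu1 (hn : 1 ≤ n) : ∑ t ∈ sUc n, eps t.2.1 * t.2.1
    = ∑ t ∈ sVc n, eps t.2.1 * t.2.1 := by
  refine Finset.sum_nbij' (i := fun t => (-t.1, t.2.1, t.2.2))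
    (j := fun t => (-t.1, t.2.1, t.2.2)) ?_ ?_ ?_ ?_ ?_
  · rintro ⟨a, d, e⟩ ht
    simp only [sUc, sVc, Finset.mem_filter] at ht ⊢; simp only [PT] at ht ⊢
    obtain ⟨-, ⟨hq, hd, he, hp⟩, hc⟩ := ht
    exact ⟨mem_bx hn (by linear_combination hq) (by omega) (by omega) (by nlinarith),
      ⟨by linear_combination hq, by omega, by omega, by omega⟩, by omega⟩
  · rintro ⟨a, d, e⟩ ht
    simp only [sUc, sVc, Finset.mem_filter] at ht ⊢; simp only [PT] at ht ⊢
    obtain ⟨-, ⟨hq, hd, he, hp⟩, hc⟩ := ht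
    exact ⟨mem_bx hn (by linear_combination hq) (by omega) (by omega) (by nlinarith),
      ⟨by linear_combination hq, by omega, by omega, by omega⟩, by omega⟩
  · rintro ⟨a, d, e⟩ _; simp
  · rintro ⟨a, d, e⟩ _; simp
  · rintro ⟨a, d, e⟩ _; rfl

lemma L_nu2 (hn : 1 ≤ n) : ∑ t ∈ sV n, eps t.2.1 * (2*t.1 - t.2.2)
    = ∑ t ∈ sU n, -(eps t.2.1 * (2*t.1 + t.2.2)) := by
  refine Finset.sum_nbij' (i := fun t => (-t.1, t.2.1, t.2.2))
    (j := fun t => (-t.1, t.2.1, t.2.2)) ?_ ?_ ?_ ?_ ?_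
  · rintro ⟨a, d, e⟩ ht
    simp only [sU, sV, Finset.mem_filter] at ht ⊢; simp only [PT] at ht ⊢
    obtain ⟨-, ⟨hq, hd, he, hp⟩, hc⟩ := ht
    exact ⟨mem_bx hn (by linear_combination hq) (by omega) (by omega) (by nlinarith),
      ⟨by linear_combination hq, by omega, by omega, by omega⟩, by omega⟩
  · rintro ⟨a, d, e⟩ ht
    simp only [sU, sV, Finset.mem_filter] at ht ⊢; simp only [PT] at ht ⊢
    obtain ⟨-, ⟨hq, hd, he, hp⟩, hc⟩ := ht
    exact ⟨mem_bx hn (by linear_combination hq) (by omega) (by omega) (by nlinarith),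
      ⟨by linear_combination hq, by omega, by omega, by omega⟩, by omega⟩
  · rintro ⟨a, d, e⟩ _; simp
  · rintro ⟨a, d, e⟩ _; simp
  · rintro ⟨a, d, e⟩ _; dsimp only; ring


lemma L_B (hn : 1 ≤ n) : ∑ t ∈ sVc n, eps t.2.1 * t.2.1
    = ∑ t ∈ sP0 n, eps t.2.1 * t.2.1 := by
  refine Finset.sum_nbij' (i := fun t => (t.1 + t.2.1, t.2.1, t.2.2 - t.2.1 - 2*t.1))
    (j := fun t => (t.1 - t.2.1, t.2.1, t.2.2 + 2*t.1 - t.2.1)) ?_ ?_ ?_ ?_ ?_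
  · rintro ⟨a, d, e⟩ ht
    simp only [sVc, sP0, Finset.mem_filter] at ht ⊢; simp only [PT, PP0] at ht ⊢
    obtain ⟨-, ⟨hq, hd, he, hp⟩, hc⟩ := ht
    have hdn : d ≤ n := by nlinarith
    exact ⟨mem_bx hn (by linear_combination hq) (by omega) (by omega) (by omega),
      by linear_combination hq, by omega, by omega, by omega, by omega⟩
  · rintro ⟨a, d, g⟩ ht
    simp only [sVc, sP0, Finset.mem_filter] at ht ⊢; simp only [PT, PP0] at ht ⊢
    obtain ⟨-, hq, hd, hg, hp, hc⟩ := ht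
    have hgd : 0 ≤ d * g := mul_nonneg (by omega) hg
    have ha : a ≤ n := by nlinarith [sq_nonneg (a - 1)]
    have hgm : g ≤ n := by nlinarith
    exact ⟨mem_bx hn (by linear_combination hq) (by omega) (by omega) (by omega),
      ⟨by linear_combination hq, by omega, by omega, by omega⟩, by omega⟩
  · rintro ⟨a, d, e⟩ _; simp only [Prod.mk.injEq]; exact ⟨by ring, trivial, by ring⟩
  · rintro ⟨a, d, g⟩ _; simp only [Prod.mk.injEq]; exact ⟨by ring, trivial, by ring⟩
  · rintro ⟨a, d, e⟩ _; rfl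

lemma sum_odds_nat (m : ℕ) : ∑ j ∈ Finset.range m, (2*(j:ℤ)+1) = (m:ℤ)^2 := by
  induction m with
  | zero => simp
  | succ m ih => rw [Finset.sum_range_succ, ih]; push_cast; ring

lemma sum_odds {w : ℤ} (hw : 0 ≤ w) :
    ∑ j ∈ Finset.Icc (0:ℤ) (w-1), (2*j+1) = w^2 := by
  have key : ∑ j ∈ Finset.Icc (0:ℤ) (w-1), (2*j+1)
      = ∑ j ∈ Finset.range w.toNat, (2*(j:ℤ)+1) := by
    refine Finset.sum_nbij' (i := fun j => j.toNat) (j := fun j => (j:ℤ)) ?_ ?_ ?_ ?_ ?_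
    · intro j hj; simp only [Finset.mem_Icc] at hj; simp only [Finset.mem_range]; omega
    · intro j hj; simp only [Finset.mem_range] at hj; simp only [Finset.mem_Icc]; omega
    · intro j hj; simp only [Finset.mem_Icc] at hj; omega
    · intro j hj; simp only [Finset.mem_range] at hj; omega
    · intro j hj; simp only [Finset.mem_Icc] at hj; omega
  rw [key, sum_odds_nat]
  have h2 : ((w.toNat:ℤ)) = w := by omega
  rw [h2]

lemma L_B0_sq (hn : 1 ≤ n) {w : ℤ} (hw : 1 ≤ w) (hw2 : w * w = n) :
    ∑ t ∈ sP0z n, eps t.2.1 * t.2.1 = n := by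
  have key : ∑ t ∈ sP0z n, eps t.2.1 * t.2.1 = ∑ j ∈ Finset.Icc (0:ℤ) (w-1), (2*j+1) := by
    refine Finset.sum_nbij' (i := fun t => (t.2.1 - 1)/2) (j := fun j => (w, 2*j+1, 0)) ?_ ?_ ?_ ?_ ?_
    · rintro ⟨a, d, g⟩ ht
      simp only [sP0z, Finset.mem_filter] at ht; simp only [PP0] at ht
      obtain ⟨-, ⟨hq, hd, hg, hp, hc⟩, hz⟩ := ht
      subst hz
      have haw : (a - w) * (a + w) = 0 := by linear_combination hq - hw2
      have ha1 : 1 ≤ a := by omega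
      have haw' : a = w := by rcases mul_eq_zero.1 haw with h | h <;> omega
      simp only [Finset.mem_Icc]
      omega
    · rintro j hj
      simp only [Finset.mem_Icc] at hj
      simp only [sP0z, Finset.mem_filter]; simp only [PP0]
      have hwn : w ≤ n := by nlinarith
      exact ⟨mem_bx hn (by linear_combination hw2) (by omega) (by omega) (by omega),
        ⟨by linear_combination hw2, by omega, by omega, by omega, by omega⟩, trivial⟩
    · rintro ⟨a, d, g⟩ ht
      simp only [sP0z, Finset.mem_filter] at ht; simp only [PP0] at ht
      obtain ⟨-, ⟨hq, hd, hg, hp, hc⟩, hz⟩ := ht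
      subst hz
      have haw : (a - w) * (a + w) = 0 := by linear_combination hq - hw2
      have ha1 : 1 ≤ a := by omega
      have haw' : a = w := by rcases mul_eq_zero.1 haw with h | h <;> omega
      simp only [Prod.mk.injEq]
      exact ⟨haw'.symm, by omega, trivial⟩
    · rintro j _; dsimp only; omega
    · rintro ⟨a, d, g⟩ ht
      simp only [sP0z, Finset.mem_filter] at ht; simp only [PP0] at ht
      obtain ⟨-, ⟨hq, hd, hg, hp, hc⟩, hz⟩ := ht
      rw [eps_odd (d := d) (by omega)]
      dsimp only
      omega
  rw [key, sum_odds (by omega)]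
  linear_combination hw2

lemma L_B0_nonsq (hns : ¬ ∃ w : ℤ, 1 ≤ w ∧ w * w = n) :
    ∑ t ∈ sP0z n, eps t.2.1 * t.2.1 = 0 := by
  rw [sP0z]
  rw [Finset.filter_false_of_mem, Finset.sum_empty]
  rintro ⟨a, d, g⟩ _ ⟨⟨hq, hd, hg, hp, hc⟩, hz⟩
  dsimp only at *
  subst hz
  exact hns ⟨a, by omega, by linear_combination hq⟩

lemma L_C (hn : 1 ≤ n) : ∑ t ∈ sU n, eps t.2.1 * (2*t.1 + t.2.2)
    = ∑ t ∈ sQ n, -eps t.2.1 * (2*t.1 - t.2.2) := by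
  refine Finset.sum_nbij' (i := fun t => (t.1 + t.2.2, t.2.1 - 2*t.1 - t.2.2, t.2.2))
    (j := fun t => (t.1 - t.2.2, t.2.1 + 2*t.1 - t.2.2, t.2.2)) ?_ ?_ ?_ ?_ ?_
  · rintro ⟨a, d, e⟩ ht
    simp only [sU, sQ, Finset.mem_filter] at ht ⊢; simp only [PT, PQ] at ht ⊢
    obtain ⟨-, ⟨hq, hd, he, hp⟩, hc⟩ := ht
    refine ⟨mem_bx hn (by linear_combination hq) (by omega) (by omega) ?_,
      by linear_combination hq, by omega, by omega, by omega, by omega⟩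
    · nlinarith [sq_nonneg (a + e)]
  · rintro ⟨a, h, e⟩ ht
    simp only [sU, sQ, Finset.mem_filter] at ht ⊢; simp only [PT, PQ] at ht ⊢
    obtain ⟨-, hq, hh, he, hp, hc⟩ := ht
    refine ⟨mem_bx hn (by linear_combination hq) (by omega) (by omega) ?_,
      ⟨by linear_combination hq, by omega, by omega, by omega⟩, by omega⟩
    · nlinarith [sq_nonneg (a - e)]
  · rintro ⟨a, d, e⟩ _; simp only [Prod.mk.injEq]; exact ⟨by ring, by ring, trivial⟩
  · rintro ⟨a, h, e⟩ _; simp only [Prod.mk.injEq]; exact ⟨by ring, by ring, trivial⟩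
  · rintro ⟨a, d, e⟩ ht
    simp only [sU, Finset.mem_filter] at ht; simp only [PT] at ht
    obtain ⟨-, ⟨hq, hd, he, hp⟩, hc⟩ := ht
    rcases Int.emod_two_eq_zero_or_one d with h2 | h2
    · rw [eps_even h2, eps_odd (d := d - 2*a - e) (by omega)]; ring
    · rw [eps_odd h2, eps_even (d := d - 2*a - e) (by omega)]; ring

lemma L_Qev : ∑ t ∈ sQev n, -eps t.2.1 * (2*t.1 - t.2.2)
    = ∑ t ∈ sW1 n, (2*t.1 - t.2.2) := by
  rw [sQev, sW1]
  rw [Finset.filter_congr (fun t _ => show (PQ n t ∧ t.2.1 % 2 = 0)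
      ↔ (PWall n t ∧ 1 ≤ t.2.1 + 2*t.1 - t.2.2) by
    constructor
    · rintro ⟨⟨hq, hh, he, hp, hc⟩, h2⟩; exact ⟨⟨hq, hh, he, h2, hp⟩, hc⟩
    · rintro ⟨⟨hq, hh, he, h2, hp⟩, hc⟩; exact ⟨⟨hq, hh, he, hp, hc⟩, h2⟩)]
  refine Finset.sum_congr rfl ?_
  rintro ⟨a, h, e⟩ ht
  simp only [Finset.mem_filter] at ht; simp only [PWall] at ht
  rw [eps_even ht.2.1.2.2.2.1]
  ring

lemma L_Qodd (hn : 1 ≤ n) : ∑ t ∈ sQodd n, -eps t.2.1 * (2*t.1 - t.2.2)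
    = ∑ t ∈ sW1 n, (2*t.1 - t.2.2) := by
  refine Finset.sum_nbij' (i := fun t => (t.2.2 - t.1, t.2.1 + 2*t.1 - t.2.2, t.2.2))
    (j := fun t => (t.2.2 - t.1, t.2.1 + 2*t.1 - t.2.2, t.2.2)) ?_ ?_ ?_ ?_ ?_
  · rintro ⟨a, h, e⟩ ht
    simp only [sQodd, sW1, Finset.mem_filter] at ht ⊢; simp only [PQ, PWall] at ht ⊢
    obtain ⟨-, ⟨hq, hh, he, hp, hc⟩, h2⟩ := ht
    refine ⟨mem_bx hn (by linear_combination hq) (by omega) (by omega) ?_,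
      ⟨by linear_combination hq, by omega, by omega, by omega, by omega⟩, by omega⟩
    · nlinarith [sq_nonneg (e - a)]
  · rintro ⟨a, h, e⟩ ht
    simp only [sQodd, sW1, Finset.mem_filter] at ht ⊢; simp only [PQ, PWall] at ht ⊢
    obtain ⟨-, ⟨hq, hh, he, h2, hp⟩, hc⟩ := ht
    refine ⟨mem_bx hn (by linear_combination hq) (by omega) (by omega) ?_,
      ⟨by linear_combination hq, by omega, by omega, by omega⟩, by omega⟩
    · nlinarith [sq_nonneg (e - a)]
  · rintro ⟨a, h, e⟩ _; simp only [Prod.mk.injEq]; exact ⟨by ring, by ring, trivial⟩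
  · rintro ⟨a, h, e⟩ _; simp only [Prod.mk.injEq]; exact ⟨by ring, by ring, trivial⟩
  · rintro ⟨a, h, e⟩ ht
    simp only [sQodd, Finset.mem_filter] at ht; simp only [PQ] at ht
    obtain ⟨-, ⟨hq, hh, he, hp, hc⟩, h2⟩ := ht
    rw [eps_odd (d := h) (by omega)]
    dsimp only
    ring

lemma L_PPodd (hn : 1 ≤ n) : ∑ t ∈ sPPodd n, eps t.2.1 * t.2.1
    = ∑ t ∈ sW1 n, t.2.2 := by
  refine Finset.sum_nbij' (i := fun t => (t.1, t.2.2, t.2.1))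
    (j := fun t => (t.1, t.2.2, t.2.1)) ?_ ?_ ?_ ?_ ?_
  · rintro ⟨a, d, g⟩ ht
    simp only [sPPodd, sW1, Finset.mem_filter] at ht ⊢; simp only [PP0, PWall] at ht ⊢
    obtain ⟨-, ⟨⟨hq, hd, hg, hp, hc⟩, hz⟩, h2⟩ := ht
    have hgd : 0 ≤ d * g := mul_nonneg (by omega) hg
    have ha : a ≤ n := by nlinarith [sq_nonneg (a - 1)]
    have hgm : g ≤ n := by nlinarith
    exact ⟨mem_bx hn (by linear_combination hq) (by omega) (by omega) (by omega),
      ⟨by linear_combination hq, by omega, by omega, by omega, by omega⟩, by omega⟩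
  · rintro ⟨a, h, e⟩ ht
    simp only [sPPodd, sW1, Finset.mem_filter] at ht ⊢; simp only [PP0, PWall] at ht ⊢
    obtain ⟨-, ⟨hq, hh, he, h2, hp⟩, hc⟩ := ht
    have hgd : 0 ≤ h * e := mul_nonneg (by omega) (by omega)
    have ha : a ≤ n := by nlinarith [sq_nonneg (a - 1)]
    have hgm : h ≤ n := by nlinarith
    exact ⟨mem_bx hn (by linear_combination hq) (by omega) (by omega) (by omega),
      ⟨⟨by linear_combination hq, by omega, by omega, by omega, by omega⟩, by omega⟩, by omega⟩
  · rintro ⟨a, d, g⟩ _; rfl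
  · rintro ⟨a, h, e⟩ _; rfl
  · rintro ⟨a, d, g⟩ ht
    simp only [sPPodd, Finset.mem_filter] at ht; simp only [PP0] at ht
    obtain ⟨-, ⟨⟨hq, hd, hg, hp, hc⟩, hz⟩, h2⟩ := ht
    rw [eps_odd h2]
    dsimp only
    ring

lemma L_PPev : ∑ t ∈ sPPev n, eps t.2.1 * t.2.1 = ∑ t ∈ sW2 n, -t.2.1 := by
  rw [sPPev, sW2]
  rw [Finset.filter_congr (fun t _ => show ((PP0 n t ∧ ¬ t.2.2 = 0) ∧ ¬ t.2.1 % 2 = 1)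
      ↔ (PWall n t ∧ 1 ≤ t.2.2 + 2*t.1 - t.2.1) by
    constructor
    · rintro ⟨⟨⟨hq, hd, hg, hp, hc⟩, hz⟩, h2⟩
      exact ⟨⟨hq, hd, by omega, by omega, by omega⟩, hc⟩
    · rintro ⟨⟨hq, hd, hg, h2, hp⟩, hc⟩
      exact ⟨⟨⟨hq, hd, by omega, by omega, hc⟩, by omega⟩, by omega⟩)]
  refine Finset.sum_congr rfl ?_
  rintro ⟨a, h, e⟩ ht
  simp only [Finset.mem_filter] at ht; simp only [PWall] at ht
  rw [eps_even ht.2.1.2.2.2.1]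
  ring

lemma L_G (hn : 1 ≤ n) : ∑ t ∈ sW2 n, (2*t.1 - t.2.1) = 0 := by
  have key : ∑ t ∈ sW2 n, (2*t.1 - t.2.1) = ∑ t ∈ sW2 n, -(2*t.1 - t.2.1) := by
    refine Finset.sum_nbij' (i := fun t => (t.2.1 - t.1, t.2.1, t.2.2 + 2*t.1 - t.2.1))
      (j := fun t => (t.2.1 - t.1, t.2.1, t.2.2 + 2*t.1 - t.2.1)) ?_ ?_ ?_ ?_ ?_
    · rintro ⟨a, h, e⟩ ht
      simp only [sW2, Finset.mem_filter] at ht ⊢; simp only [PWall] at ht ⊢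
      obtain ⟨-, ⟨hq, hh, he, h2, hp⟩, hc⟩ := ht
      have hgd : 0 ≤ h * e := mul_nonneg (by omega) (by omega)
      have ha : a ≤ n := by nlinarith [sq_nonneg (a - 1)]
      have hhm : h ≤ n := by nlinarith
      exact ⟨mem_bx hn (by linear_combination hq) (by omega) (by omega) (by omega),
        ⟨by linear_combination hq, by omega, by omega, by omega, by omega⟩, by omega⟩
    · rintro ⟨a, h, e⟩ ht
      simp only [sW2, Finset.mem_filter] at ht ⊢; simp only [PWall] at ht ⊢
      obtain ⟨-, ⟨hq, hh, he, h2, hp⟩, hc⟩ := ht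
      have hgd : 0 ≤ h * e := mul_nonneg (by omega) (by omega)
      have ha : a ≤ n := by nlinarith [sq_nonneg (a - 1)]
      have hhm : h ≤ n := by nlinarith
      exact ⟨mem_bx hn (by linear_combination hq) (by omega) (by omega) (by omega),
        ⟨by linear_combination hq, by omega, by omega, by omega, by omega⟩, by omega⟩
    · rintro ⟨a, h, e⟩ _; simp only [Prod.mk.injEq]; exact ⟨by ring, trivial, by ring⟩
    · rintro ⟨a, h, e⟩ _; simp only [Prod.mk.injEq]; exact ⟨by ring, trivial, by ring⟩
    · rintro ⟨a, h, e⟩ _; dsimp only; ring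
  have h2 := key
  rw [Finset.sum_neg_distrib] at h2
  linarith

lemma L_Wall0 (hn : 1 ≤ n) : ∑ t ∈ sWall n, t.1 = 0 := by
  have key : ∑ t ∈ sWall n, t.1 = ∑ t ∈ sWall n, -t.1 := by
    refine Finset.sum_nbij' (i := fun t => (-t.1, t.2.1, t.2.2))
      (j := fun t => (-t.1, t.2.1, t.2.2)) ?_ ?_ ?_ ?_ ?_
    · rintro ⟨a, h, e⟩ ht
      simp only [sWall, Finset.mem_filter] at ht ⊢; simp only [PWall] at ht ⊢
      obtain ⟨-, hq, hh, he, h2, hp⟩ := ht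
      exact ⟨mem_bx hn (by linear_combination hq) (by omega) (by omega) (by nlinarith),
        by linear_combination hq, by omega, by omega, by omega, by omega⟩
    · rintro ⟨a, h, e⟩ ht
      simp only [sWall, Finset.mem_filter] at ht ⊢; simp only [PWall] at ht ⊢
      obtain ⟨-, hq, hh, he, h2, hp⟩ := ht
      exact ⟨mem_bx hn (by linear_combination hq) (by omega) (by omega) (by nlinarith),
        by linear_combination hq, by omega, by omega, by omega, by omega⟩
    · rintro ⟨a, h, e⟩ _; simp
    · rintro ⟨a, h, e⟩ _; simp
    · rintro ⟨a, h, e⟩ _; dsimp only; ring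
  have h2 := key
  rw [Finset.sum_neg_distrib] at h2
  linarith

lemma L_W2W1 (hn : 1 ≤ n) : ∑ t ∈ sW2 n, t.1 = ∑ t ∈ sW1c n, -t.1 := by
  refine Finset.sum_nbij' (i := fun t => (-t.1, t.2.1, t.2.2))
    (j := fun t => (-t.1, t.2.1, t.2.2)) ?_ ?_ ?_ ?_ ?_
  · rintro ⟨a, h, e⟩ ht
    simp only [sW2, sW1c, Finset.mem_filter] at ht ⊢; simp only [PWall] at ht ⊢
    obtain ⟨-, ⟨hq, hh, he, h2, hp⟩, hc⟩ := ht
    exact ⟨mem_bx hn (by linear_combination hq) (by omega) (by omega) (by nlinarith),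
      ⟨by linear_combination hq, by omega, by omega, by omega, by omega⟩, by omega⟩
  · rintro ⟨a, h, e⟩ ht
    simp only [sW2, sW1c, Finset.mem_filter] at ht ⊢; simp only [PWall] at ht ⊢
    obtain ⟨-, ⟨hq, hh, he, h2, hp⟩, hc⟩ := ht
    exact ⟨mem_bx hn (by linear_combination hq) (by omega) (by omega) (by nlinarith),
      ⟨by linear_combination hq, by omega, by omega, by omega, by omega⟩, by omega⟩
  · rintro ⟨a, h, e⟩ _; simp
  · rintro ⟨a, h, e⟩ _; simp
  · rintro ⟨a, h, e⟩ _; dsimp only; ring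


lemma star_D (hn : 1 ≤ n) : ∑ t ∈ sT n, eps t.2.1 * t.2.1
    = (if ∃ w : ℤ, 1 ≤ w ∧ w * w = n then n else 0) := by
  have e_phi : ∑ t ∈ sU n, eps t.2.1 * t.2.1
      = -(∑ t ∈ sV n, eps t.2.1 * t.2.1) - ∑ t ∈ sV n, eps t.2.1 * (2*t.1 - t.2.2) := by
    have h2 : -(∑ t ∈ sV n, eps t.2.1 * t.2.1) - ∑ t ∈ sV n, eps t.2.1 * (2*t.1 - t.2.2)
        = ∑ t ∈ sV n, (-(eps t.2.1 * t.2.1) - eps t.2.1 * (2*t.1 - t.2.2)) := by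
      rw [Finset.sum_sub_distrib, Finset.sum_neg_distrib]
    rw [L_phi hn, h2]
    exact Finset.sum_congr rfl fun t _ => by ring
  have e_nu2 : ∑ t ∈ sV n, eps t.2.1 * (2*t.1 - t.2.2)
      = -(∑ t ∈ sU n, eps t.2.1 * (2*t.1 + t.2.2)) := by
    rw [L_nu2 hn, Finset.sum_neg_distrib]
  have e_T := split_T (n := n)
  have e_T' := split_T' (n := n)
  have e_nu1 := L_nu1 hn
  have e_B := L_B hn
  have e_P0 := split_P0 (n := n)
  have e_PPs := split_PP (n := n)
  have e_PPodd := L_PPodd hn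
  have e_PPev : ∑ t ∈ sPPev n, eps t.2.1 * t.2.1 = -(∑ t ∈ sW2 n, t.2.1) := by
    rw [L_PPev, Finset.sum_neg_distrib]
  have e_C := L_C hn
  have e_Qs := split_Q (n := n)
  have e_Qev := L_Qev (n := n)
  have e_Qodd := L_Qodd hn
  have e_W1dist : ∑ t ∈ sW1 n, (2*t.1 - t.2.2)
      = 2*(∑ t ∈ sW1 n, t.1) - ∑ t ∈ sW1 n, t.2.2 := by
    rw [Finset.mul_sum, ← Finset.sum_sub_distrib]
  have e_W2dist : ∑ t ∈ sW2 n, (2*t.1 - t.2.1)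
      = 2*(∑ t ∈ sW2 n, t.1) - ∑ t ∈ sW2 n, t.2.1 := by
    rw [Finset.mul_sum, ← Finset.sum_sub_distrib]
  have e_G := L_G hn
  have e_W2W1 : ∑ t ∈ sW2 n, t.1 = -(∑ t ∈ sW1c n, t.1) := by
    rw [L_W2W1 hn, Finset.sum_neg_distrib]
  have e_Wall := L_Wall0 hn
  have e_Walls := split_Wall (n := n)
  by_cases hsq : ∃ w : ℤ, 1 ≤ w ∧ w * w = n
  · obtain ⟨w, hw1, hw2⟩ := hsq
    have e_B0 := L_B0_sq hn hw1 hw2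
    rw [if_pos ⟨w, hw1, hw2⟩]
    linarith
  · have e_B0 := L_B0_nonsq hsq
    rw [if_neg hsq]
    linarith

lemma star_fiber (hn : 1 ≤ n) : ∑ t ∈ sT n, eps t.2.1 * t.2.1
    = ∑ a ∈ Finset.Icc (-n) n, StF (n - a^2) := by
  have hmaps : ∀ t ∈ sT n, t.1 ∈ Finset.Icc (-n) n := by
    rintro ⟨a, d, e⟩ ht
    simp only [sT, Finset.mem_filter] at ht; simp only [PT] at ht
    obtain ⟨-, hq, hd, he, hp⟩ := ht
    have hde : 1 ≤ d * e := by nlinarith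
    simp only [Finset.mem_Icc]
    constructor
    · nlinarith [sq_nonneg (a + 1)]
    · nlinarith [sq_nonneg (a - 1)]
  rw [← Finset.sum_fiberwise_of_maps_to hmaps (fun t => eps t.2.1 * t.2.1)]
  refine Finset.sum_congr rfl fun a _ => ?_
  rw [StF]
  refine Finset.sum_nbij' (i := fun t => (t.2.1, t.2.2)) (j := fun p => (a, p.1, p.2)) ?_ ?_ ?_ ?_ ?_
  · rintro ⟨a', d, e⟩ ht
    simp only [sT, Finset.mem_filter] at ht; simp only [PT] at ht
    obtain ⟨⟨-, hq, hd, he, hp⟩, ha⟩ := ht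
    subst ha
    simp only [Finset.mem_filter, Finset.mem_product, Finset.mem_Icc]
    refine ⟨⟨⟨hd, by nlinarith⟩, he, by nlinarith⟩, by linarith, hp⟩
  · rintro ⟨d, e⟩ hp
    simp only [Finset.mem_filter, Finset.mem_product, Finset.mem_Icc] at hp
    obtain ⟨⟨⟨hd1, hd2⟩, he1, he2⟩, hde, hp2⟩ := hp
    simp only [sT, Finset.mem_filter]; simp only [PT]
    have hq : a^2 + d * e = n := by linarith
    exact ⟨⟨mem_bx hn hq hd1 (by omega) (by nlinarith), hq, hd1, he1, hp2⟩, trivial⟩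
  · rintro ⟨a', d, e⟩ ht
    simp only [sT, Finset.mem_filter] at ht; simp only [PT] at ht
    obtain ⟨-, ha⟩ := ht
    subst ha
    rfl
  · rintro ⟨d, e⟩ _; rfl
  · rintro ⟨a', d, e⟩ _; rfl

lemma star {u : ℤ} (hu : 1 ≤ u) :
    ∑ t ∈ (Finset.Icc (-u) u).filter (fun t => t^2 = u), t^2
      = 2 * ∑ a ∈ Finset.Icc (-u) u, StF (u - a^2) := by
  have hD : ∑ a ∈ Finset.Icc (-u) u, StF (u - a^2)
      = (if ∃ w : ℤ, 1 ≤ w ∧ w * w = u then u else 0) := by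
    rw [← star_fiber hu, star_D hu]
  rw [hD]
  by_cases hsq : ∃ w : ℤ, 1 ≤ w ∧ w * w = u
  · obtain ⟨w, hw1, hw2⟩ := hsq
    rw [if_pos ⟨w, hw1, hw2⟩]
    have hwu : w ≤ u := by nlinarith
    have hset : (Finset.Icc (-u) u).filter (fun t => t^2 = u) = {w, -w} := by
      ext t
      simp only [Finset.mem_filter, Finset.mem_Icc, Finset.mem_insert, Finset.mem_singleton]
      constructor
      · rintro ⟨⟨h1, h2⟩, h3⟩
        have hz : (t - w) * (t + w) = 0 := by linear_combination h3 - hw2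
        rcases mul_eq_zero.1 hz with h | h
        · left; omega
        · right; omega
      · rintro (rfl | rfl)
        · exact ⟨⟨by omega, hwu⟩, by linear_combination hw2⟩
        · exact ⟨⟨by omega, by omega⟩, by linear_combination hw2⟩
    rw [hset, Finset.sum_insert (by simp only [Finset.mem_singleton]; omega),
      Finset.sum_singleton]
    linear_combination 2 * hw2
  · rw [if_neg hsq, Finset.filter_false_of_mem, Finset.sum_empty]
    · ring
    · intro t _ h3
      apply hsq
      have ht0 : t ≠ 0 := by
        intro h0
        rw [h0] at h3
        simp at h3
        omega
      rcases le_or_gt 1 t with h | h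
      · exact ⟨t, h, by linear_combination h3⟩
      · exact ⟨-t, by omega, by linear_combination h3⟩

end Star

section Reps

def repF (k : ℕ) (v : ℤ) : Finset (Fin k → ℤ) :=
  (Fintype.piFinset (fun _ : Fin k => Finset.Icc (-v) v)).filter (fun x => ∑ i, (x i)^2 = v)

def cnt (k : ℕ) (v : ℤ) : ℤ := ((repF k v).card : ℤ)

lemma mem_repF {k : ℕ} {v : ℤ} {x : Fin k → ℤ} : x ∈ repF k v ↔ ∑ i, (x i)^2 = v := by
  constructor
  · intro h; exact (Finset.mem_filter.1 h).2
  · intro h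
    refine Finset.mem_filter.2 ⟨Fintype.mem_piFinset.2 fun i => ?_, h⟩
    have h1 : (x i)^2 ≤ v := by
      rw [← h]
      exact Finset.single_le_sum (f := fun i => (x i)^2) (fun j _ => sq_nonneg _)
        (Finset.mem_univ i)
    simp only [Finset.mem_Icc]
    constructor
    · nlinarith [sq_nonneg (x i + 1)]
    · nlinarith [sq_nonneg (x i - 1)]

lemma cnt_neg {k : ℕ} {v : ℤ} (hv : v < 0) : cnt k v = 0 := by
  have he : repF k v = ∅ := Finset.eq_empty_iff_forall_notMem.2 (fun x hx => by
    have h := mem_repF.1 hx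
    have h2 : (0:ℤ) ≤ ∑ i, (x i)^2 := Finset.sum_nonneg fun i _ => sq_nonneg _
    omega)
  rw [cnt, he]
  simp

lemma cnt_zero {k : ℕ} : cnt k 0 = 1 := by
  rw [cnt]
  have h : repF k 0 = {(fun _ => 0 : Fin k → ℤ)} := by
    ext x
    rw [mem_repF, Finset.mem_singleton]
    constructor
    · intro h
      funext i
      have h0 := (Finset.sum_eq_zero_iff_of_nonneg (fun j _ => sq_nonneg (x j))).1 h i
        (Finset.mem_univ i)
      exact pow_eq_zero_iff (two_ne_zero) |>.1 h0
    · rintro rfl; simp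
  rw [h, Finset.card_singleton]
  rfl

lemma sum_last {K : ℕ} {v : ℤ} (G : ℤ → ℤ) :
    ∑ x ∈ repF (K+1) v, G (x (Fin.last K))
      = ∑ t ∈ Finset.Icc (-v) v, G t * cnt K (v - t^2) := by
  have hmaps : ∀ x ∈ repF (K+1) v, x (Fin.last K) ∈ Finset.Icc (-v) v := by
    intro x hx
    have h := mem_repF.1 hx
    have h1 : (x (Fin.last K))^2 ≤ v := by
      rw [← h]
      exact Finset.single_le_sum (f := fun i => (x i)^2) (fun j _ => sq_nonneg _)
        (Finset.mem_univ _)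
    simp only [Finset.mem_Icc]
    constructor
    · nlinarith [sq_nonneg (x (Fin.last K) + 1)]
    · nlinarith [sq_nonneg (x (Fin.last K) - 1)]
  rw [← Finset.sum_fiberwise_of_maps_to hmaps (fun x => G (x (Fin.last K)))]
  refine Finset.sum_congr rfl fun t _ => ?_
  have hcongr : ∀ x ∈ (repF (K+1) v).filter (fun x => x (Fin.last K) = t),
      G (x (Fin.last K)) = G t := by
    intro x hx
    rw [(Finset.mem_filter.1 hx).2]
  rw [Finset.sum_congr rfl hcongr, Finset.sum_const, nsmul_eq_mul]
  have hcard : ((repF (K+1) v).filter (fun x => x (Fin.last K) = t)).card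
      = (repF K (v - t^2)).card := by
    refine Finset.card_nbij' (i := fun x => Fin.init x) (j := fun y => Fin.snoc y t) ?_ ?_ ?_ ?_
    · intro x hx
      obtain ⟨hx1, hx2⟩ := Finset.mem_filter.1 hx
      have h := mem_repF.1 hx1
      rw [Fin.sum_univ_castSucc, hx2] at h
      refine mem_repF.2 ?_
      have : ∀ i : Fin K, Fin.init x i = x (Fin.castSucc i) := fun i => rfl
      calc ∑ i, (Fin.init x i)^2 = ∑ i : Fin K, (x (Fin.castSucc i))^2 := rfl
        _ = v - t^2 := by omega
    · intro y hy
      have h := mem_repF.1 hy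
      refine Finset.mem_filter.2 ⟨mem_repF.2 ?_, by simp⟩
      rw [Fin.sum_univ_castSucc]
      simp only [Fin.snoc_last, Fin.snoc_castSucc]
      omega
    · intro x hx
      obtain ⟨-, hx2⟩ := Finset.mem_filter.1 hx
      rw [← hx2]
      exact Fin.snoc_init_self x
    · intro y _
      simp
  rw [hcard, mul_comm, cnt]

lemma C1 {K : ℕ} {v : ℤ} : cnt (K+1) v = ∑ t ∈ Finset.Icc (-v) v, cnt K (v - t^2) := by
  have h := sum_last (K := K) (v := v) (fun _ => 1)
  rw [Finset.sum_const, nsmul_eq_mul, mul_one] at h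
  rw [cnt, h]
  exact Finset.sum_congr rfl fun t _ => one_mul _

lemma C2 {K : ℕ} {v : ℤ} : ∑ x ∈ repF (K+1) v, (x (Fin.last K))^2
    = ∑ t ∈ Finset.Icc (-v) v, t^2 * cnt K (v - t^2) := sum_last (fun t => t^2)

lemma coord_swap {k : ℕ} {v : ℤ} (i j : Fin k) :
    ∑ x ∈ repF k v, (x i)^2 = ∑ x ∈ repF k v, (x j)^2 := by
  refine Finset.sum_nbij' (i := fun x => x ∘ Equiv.swap i j)
    (j := fun x => x ∘ Equiv.swap i j) ?_ ?_ ?_ ?_ ?_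
  · intro x hx
    refine mem_repF.2 ?_
    rw [← mem_repF.1 hx]
    exact Equiv.sum_comp (Equiv.swap i j) (fun l => (x l)^2)
  · intro x hx
    refine mem_repF.2 ?_
    rw [← mem_repF.1 hx]
    exact Equiv.sum_comp (Equiv.swap i j) (fun l => (x l)^2)
  · intro x _
    funext l
    simp [Equiv.swap_apply_self]
  · intro x _
    funext l
    simp [Equiv.swap_apply_self]
  · intro x _
    simp [Equiv.swap_apply_right]

lemma weighted {K : ℕ} {v : ℤ} : v * cnt (K+1) v
    = (K+1 : ℤ) * ∑ t ∈ Finset.Icc (-v) v, t^2 * cnt K (v - t^2) := by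
  have h1 : ∀ x ∈ repF (K+1) v, ∑ i, (x i)^2 = v := fun x hx => mem_repF.1 hx
  have step1 : ∑ x ∈ repF (K+1) v, ∑ i, (x i)^2 = v * cnt (K+1) v := by
    rw [Finset.sum_congr rfl h1, Finset.sum_const, nsmul_eq_mul, cnt]
    ring
  have step2 : ∑ x ∈ repF (K+1) v, ∑ i, (x i)^2
      = ∑ i : Fin (K+1), ∑ x ∈ repF (K+1) v, (x i)^2 := Finset.sum_comm
  have step3 : ∑ i : Fin (K+1), ∑ x ∈ repF (K+1) v, (x i)^2
      = (K+1 : ℤ) * ∑ x ∈ repF (K+1) v, (x (Fin.last K))^2 := by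
    rw [Finset.sum_congr rfl (fun i _ => coord_swap i (Fin.last K)), Finset.sum_const,
      Finset.card_univ, Fintype.card_fin, nsmul_eq_mul]
    push_cast
    ring
  rw [← step1, step2, step3, C2]

end Reps

section Chain

lemma sum_pad (f : ℤ → ℤ) {lo hi : ℤ} {A B : Finset ℤ}
    (hsupp : ∀ x, f x ≠ 0 → x ∈ Finset.Icc lo hi)
    (hA : Finset.Icc lo hi ⊆ A) (hB : Finset.Icc lo hi ⊆ B) :
    ∑ x ∈ A, f x = ∑ x ∈ B, f x := by
  have hA0 : ∑ x ∈ Finset.Icc lo hi, f x = ∑ x ∈ A, f x :=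
    Finset.sum_subset hA (fun x _ hx => by
      by_contra h
      exact hx (hsupp x h))
  have hB0 : ∑ x ∈ Finset.Icc lo hi, f x = ∑ x ∈ B, f x :=
    Finset.sum_subset hB (fun x _ hx => by
      by_contra h
      exact hx (hsupp x h))
  rw [← hA0, hB0]

lemma abs_le_sq_facts {a c : ℤ} (hc : 0 ≤ c) (h : ¬ (-c ≤ a ∧ a ≤ c)) : c < a^2 := by
  push_neg at h
  rcases le_or_gt (-c) a with h1 | h1
  · have h2 := h h1
    nlinarith [sq_nonneg (a - 1)]
  · nlinarith [sq_nonneg (a + 1)]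

lemma main_chain {K : ℕ} {m : ℤ} (hm : 1 ≤ m) :
    m * cnt (K+1) m
      = 2 * (K+1 : ℤ) * ∑ l ∈ Finset.Icc 1 m, StF l * cnt (K+1) (m - l) := by
  rw [weighted]
  suffices h : ∑ t ∈ Finset.Icc (-m) m, t^2 * cnt K (m - t^2)
      = 2 * ∑ l ∈ Finset.Icc 1 m, StF l * cnt (K+1) (m - l) by rw [h]; ring
  -- expand cnt (K+1) via C1, padded to the big range
  have hexp : ∀ l ∈ Finset.Icc (1:ℤ) m, StF l * cnt (K+1) (m - l)
      = ∑ a ∈ Finset.Icc (-m) m, StF l * cnt K (m - l - a^2) := by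
    intro l hl
    simp only [Finset.mem_Icc] at hl
    rw [C1 (K := K) (v := m - l), Finset.mul_sum]
    refine sum_pad (f := fun a => StF l * cnt K (m - l - a^2))
      (lo := -(m-l)) (hi := m-l) ?_ (Finset.Subset.refl _)
      (Finset.Icc_subset_Icc (by omega) (by omega))
    intro a ha
    by_contra hmem
    simp only [Finset.mem_Icc] at hmem
    have h1 : m - l < a^2 := abs_le_sq_facts (by omega) hmem
    exact ha (by rw [cnt_neg (by omega), mul_zero])
  rw [Finset.sum_congr rfl hexp, Finset.sum_comm]
  -- reindex inner sum l ↦ u = l + a²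
  have hre : ∀ a ∈ Finset.Icc (-m) m,
      ∑ l ∈ Finset.Icc (1:ℤ) m, StF l * cnt K (m - l - a^2)
      = ∑ u ∈ Finset.Icc (1:ℤ) m, StF (u - a^2) * cnt K (m - u) := by
    intro a _
    have h1 : ∑ l ∈ Finset.Icc (1:ℤ) m, StF l * cnt K (m - l - a^2)
        = ∑ l ∈ Finset.Icc (1:ℤ) (m - a^2), StF l * cnt K (m - l - a^2) := by
      refine sum_pad (f := fun l => StF l * cnt K (m - l - a^2))
        (lo := 1) (hi := m - a^2) ?_
        (Finset.Icc_subset_Icc le_rfl (by nlinarith [sq_nonneg a]))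
        (Finset.Subset.refl _)
      intro l hl
      simp only [Finset.mem_Icc]
      constructor
      · by_contra hc
        exact hl (by rw [StF_nonpos (by omega), zero_mul])
      · by_contra hc
        exact hl (by rw [cnt_neg (by omega), mul_zero])
    have h2 : ∑ l ∈ Finset.Icc (1:ℤ) (m - a^2), StF l * cnt K (m - l - a^2)
        = ∑ u ∈ Finset.Icc (1 + a^2) m, StF (u - a^2) * cnt K (m - u) := by
      refine Finset.sum_nbij' (i := fun l => l + a^2) (j := fun u => u - a^2) ?_ ?_ ?_ ?_ ?_
      · intro l hl; simp only [Finset.mem_Icc] at hl ⊢; omega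
      · intro u hu; simp only [Finset.mem_Icc] at hu ⊢; omega
      · intro l _; ring
      · intro u _; ring
      · intro l _
        rw [show l + a^2 - a^2 = l by ring, show m - (l + a^2) = m - l - a^2 by ring]
    have h3 : ∑ u ∈ Finset.Icc (1 + a^2) m, StF (u - a^2) * cnt K (m - u)
        = ∑ u ∈ Finset.Icc (1:ℤ) m, StF (u - a^2) * cnt K (m - u) := by
      refine sum_pad (f := fun u => StF (u - a^2) * cnt K (m - u))
        (lo := 1 + a^2) (hi := m) ?_ (Finset.Subset.refl _)
        (Finset.Icc_subset_Icc (by nlinarith [sq_nonneg a]) le_rfl)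
      intro u hu
      simp only [Finset.mem_Icc]
      constructor
      · by_contra hc
        exact hu (by rw [StF_nonpos (by omega), zero_mul])
      · by_contra hc
        exact hu (by rw [cnt_neg (by omega), mul_zero])
    rw [h1, h2, h3]
  rw [Finset.sum_congr rfl hre, Finset.sum_comm]
  -- now apply star for each u
  have hu1 : ∀ u ∈ Finset.Icc (1:ℤ) m,
      2 * ∑ a ∈ Finset.Icc (-m) m, StF (u - a^2) * cnt K (m - u)
      = ∑ t ∈ (Finset.Icc (-u) u).filter (fun t => t^2 = u), t^2 * cnt K (m - t^2) := by
    intro u hu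
    simp only [Finset.mem_Icc] at hu
    have hpad : ∑ a ∈ Finset.Icc (-m) m, StF (u - a^2)
        = ∑ a ∈ Finset.Icc (-u) u, StF (u - a^2) := by
      refine sum_pad (f := fun a => StF (u - a^2)) (lo := -u) (hi := u) ?_
        (Finset.Icc_subset_Icc (by omega) (by omega)) (Finset.Subset.refl _)
      intro a ha
      by_contra hmem
      simp only [Finset.mem_Icc] at hmem
      have h1 : u < a^2 := abs_le_sq_facts (by omega) hmem
      exact ha (by rw [StF_nonpos (by omega)])
    calc 2 * ∑ a ∈ Finset.Icc (-m) m, StF (u - a^2) * cnt K (m - u)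
        = (2 * ∑ a ∈ Finset.Icc (-m) m, StF (u - a^2)) * cnt K (m - u) := by
          rw [← Finset.sum_mul]; ring
      _ = (2 * ∑ a ∈ Finset.Icc (-u) u, StF (u - a^2)) * cnt K (m - u) := by rw [hpad]
      _ = (∑ t ∈ (Finset.Icc (-u) u).filter (fun t => t^2 = u), t^2) * cnt K (m - u) := by
          rw [← star hu.1]
      _ = ∑ t ∈ (Finset.Icc (-u) u).filter (fun t => t^2 = u), t^2 * cnt K (m - u) := by
          rw [Finset.sum_mul]
      _ = ∑ t ∈ (Finset.Icc (-u) u).filter (fun t => t^2 = u), t^2 * cnt K (m - t^2) := by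
          refine Finset.sum_congr rfl fun t ht => ?_
          obtain ⟨-, ht2⟩ := Finset.mem_filter.1 ht
          rw [ht2]
  have hfib : ∑ u ∈ Finset.Icc (1:ℤ) m,
      ∑ t ∈ (Finset.Icc (-u) u).filter (fun t => t^2 = u), t^2 * cnt K (m - t^2)
      = ∑ t ∈ Finset.Icc (-m) m, t^2 * cnt K (m - t^2) := by
    have hsets : ∀ u ∈ Finset.Icc (1:ℤ) m, (Finset.Icc (-u) u).filter (fun t => t^2 = u)
        = ((Finset.Icc (-m) m).filter (fun t => 1 ≤ t^2 ∧ t^2 ≤ m)).filter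
            (fun t => t^2 = u) := by
      intro u hu
      simp only [Finset.mem_Icc] at hu
      ext t
      simp only [Finset.mem_filter, Finset.mem_Icc]
      constructor
      · rintro ⟨⟨h1, h2⟩, h3⟩
        exact ⟨⟨⟨by omega, by omega⟩, by omega, by omega⟩, h3⟩
      · rintro ⟨⟨⟨h1, h2⟩, h3, h4⟩, h5⟩
        refine ⟨⟨?_, ?_⟩, h5⟩
        · nlinarith [sq_nonneg (t + 1)]
        · nlinarith [sq_nonneg (t - 1)]
    rw [Finset.sum_congr rfl (fun u hu => by rw [hsets u hu] :
      ∀ u ∈ Finset.Icc (1:ℤ) m, ∑ t ∈ (Finset.Icc (-u) u).filter (fun t => t^2 = u),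
        t^2 * cnt K (m - t^2) = ∑ t ∈ ((Finset.Icc (-m) m).filter
          (fun t => 1 ≤ t^2 ∧ t^2 ≤ m)).filter (fun t => t^2 = u), t^2 * cnt K (m - t^2))]
    have hmaps : ∀ t ∈ (Finset.Icc (-m) m).filter (fun t => 1 ≤ t^2 ∧ t^2 ≤ m),
        t^2 ∈ Finset.Icc (1:ℤ) m := by
      intro t ht
      obtain ⟨-, h1, h2⟩ := Finset.mem_filter.1 ht
      simp only [Finset.mem_Icc]
      exact ⟨h1, h2⟩
    rw [Finset.sum_fiberwise_of_maps_to hmaps (fun t => t^2 * cnt K (m - t^2))]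
    refine Finset.sum_filter_of_ne ?_
    intro t _ hne
    constructor
    · by_contra hc
      have h0 : t^2 = 0 := by nlinarith [sq_nonneg t]
      exact hne (by rw [h0, zero_mul])
    · by_contra hc
      exact hne (by rw [cnt_neg (by omega), mul_zero])
  refine Eq.symm ?_
  calc 2 * ∑ u ∈ Finset.Icc (1:ℤ) m,
        ∑ a ∈ Finset.Icc (-m) m, StF (u - a^2) * cnt K (m - u)
      = ∑ u ∈ Finset.Icc (1:ℤ) m,
          2 * ∑ a ∈ Finset.Icc (-m) m, StF (u - a^2) * cnt K (m - u) := Finset.mul_sum _ _ _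
    _ = ∑ u ∈ Finset.Icc (1:ℤ) m,
          ∑ t ∈ (Finset.Icc (-u) u).filter (fun t => t^2 = u), t^2 * cnt K (m - t^2) :=
        Finset.sum_congr rfl hu1
    _ = ∑ t ∈ Finset.Icc (-m) m, t^2 * cnt K (m - t^2) := hfib

end Chain


section Convert

lemma StF_eq_divisors (N : ℕ) (hN : 1 ≤ N) :
    StF (N:ℤ) = ∑ d ∈ N.divisors.filter (fun d => Odd (N / d)), eps (d:ℤ) * (d:ℤ) := by
  rw [StF]
  refine Finset.sum_nbij' (i := fun p => p.1.toNat) (j := fun d => ((d:ℤ), ((N/d : ℕ) : ℤ)))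
    ?_ ?_ ?_ ?_ ?_
  · rintro ⟨d, e⟩ hp
    simp only [Finset.mem_filter, Finset.mem_product, Finset.mem_Icc] at hp
    obtain ⟨⟨⟨hd1, hd2⟩, he1, he2⟩, hde, hp2⟩ := hp
    simp only [Finset.mem_filter, Nat.mem_divisors]
    have hd : (d.toNat : ℤ) = d := by omega
    have he : (e.toNat : ℤ) = e := by omega
    have hmul : d.toNat * e.toNat = N := by
      have : ((d.toNat * e.toNat : ℕ) : ℤ) = (N:ℤ) := by push_cast; rw [hd, he]; exact hde
      exact_mod_cast this
    have hdiv : N / d.toNat = e.toNat := by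
      rw [← hmul, Nat.mul_div_cancel_left _ (by omega)]
    refine ⟨⟨⟨e.toNat, hmul.symm⟩, by omega⟩, ?_⟩
    rw [hdiv, Nat.odd_iff]
    omega
  · intro d hd
    simp only [Finset.mem_filter, Nat.mem_divisors] at hd
    obtain ⟨⟨hdvd, hN0⟩, hodd⟩ := hd
    simp only [Finset.mem_filter, Finset.mem_product, Finset.mem_Icc]
    have hd1 : 1 ≤ d := Nat.one_le_iff_ne_zero.2 (by rintro rfl; simp at hdvd; omega)
    have hdN : d ≤ N := Nat.le_of_dvd (by omega) hdvd
    have hq1 : 1 ≤ N / d := Nat.one_le_div_iff (by omega) |>.2 hdN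
    have hqN : N / d ≤ N := Nat.div_le_self _ _
    have hmul : d * (N / d) = N := Nat.mul_div_cancel' hdvd
    refine ⟨⟨⟨by exact_mod_cast hd1, by exact_mod_cast hdN⟩,
      by exact_mod_cast hq1, by exact_mod_cast hqN⟩, ?_, ?_⟩
    · push_cast
      exact_mod_cast congrArg (Nat.cast : ℕ → ℤ) hmul
    · have := Nat.odd_iff.1 hodd
      omega
  · rintro ⟨d, e⟩ hp
    simp only [Finset.mem_filter, Finset.mem_product, Finset.mem_Icc] at hp
    obtain ⟨⟨⟨hd1, hd2⟩, he1, he2⟩, hde, hp2⟩ := hp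
    have hd : (d.toNat : ℤ) = d := by omega
    have he : (e.toNat : ℤ) = e := by omega
    have hmul : d.toNat * e.toNat = N := by
      have : ((d.toNat * e.toNat : ℕ) : ℤ) = (N:ℤ) := by push_cast; rw [hd, he]; exact hde
      exact_mod_cast this
    have hdiv : N / d.toNat = e.toNat := by
      rw [← hmul, Nat.mul_div_cancel_left _ (by omega)]
    simp only [Prod.mk.injEq]
    exact ⟨hd, by rw [hdiv]; exact he⟩
  · intro d hd
    simp only [Finset.mem_filter, Nat.mem_divisors] at hd
    dsimp only
    omega
  · rintro ⟨d, e⟩ hp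
    simp only [Finset.mem_filter, Finset.mem_product, Finset.mem_Icc] at hp
    obtain ⟨⟨⟨hd1, hd2⟩, he1, he2⟩, hde, hp2⟩ := hp
    have hd : (d.toNat : ℤ) = d := by omega
    rw [hd]

lemma sigmaStar_double (M : ℕ) (hM : 1 ≤ M) : sigmaStar (2*M) = 2 * sigmaStar M := by
  rw [sigmaStar, sigmaStar, Finset.mul_sum]
  refine Finset.sum_nbij' (i := fun d => d / 2) (j := fun d => 2*d) ?_ ?_ ?_ ?_ ?_
  · intro d hd
    simp only [Finset.mem_filter, Nat.mem_divisors] at hd ⊢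
    obtain ⟨⟨hdvd, hN0⟩, hodd⟩ := hd
    have hd0 : d ≠ 0 := by rintro rfl; simp at hdvd; omega
    have hmul : d * (2*M / d) = 2*M := Nat.mul_div_cancel' hdvd
    have heven : 2 ∣ d := by
      rcases Nat.even_or_odd d with he | ho
      · exact he.two_dvd
      · exfalso
        have : Odd (d * (2*M/d)) := ho.mul hodd
        rw [hmul] at this
        rcases this with ⟨c, hc⟩
        omega
    obtain ⟨d', rfl⟩ := heven
    have hdvd' : d' ∣ M := (mul_dvd_mul_iff_left (two_ne_zero)).1 hdvd
    have hdiv : 2*M / (2*d') = M / d' := Nat.mul_div_mul_left _ _ (by omega)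
    rw [hdiv] at hodd
    have h22 : 2*d'/2 = d' := by omega
    rw [h22]
    exact ⟨⟨hdvd', by omega⟩, hodd⟩
  · intro d hd
    simp only [Finset.mem_filter, Nat.mem_divisors] at hd ⊢
    obtain ⟨⟨hdvd, hN0⟩, hodd⟩ := hd
    have hdiv : 2*M / (2*d) = M / d := Nat.mul_div_mul_left _ _ (by omega)
    exact ⟨⟨mul_dvd_mul_left 2 hdvd, by omega⟩, by rw [hdiv]; exact hodd⟩
  · intro d hd
    simp only [Finset.mem_filter, Nat.mem_divisors] at hd
    obtain ⟨⟨hdvd, hN0⟩, hodd⟩ := hd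
    have hd0 : d ≠ 0 := by rintro rfl; simp at hdvd; omega
    have hmul : d * (2*M / d) = 2*M := Nat.mul_div_cancel' hdvd
    have heven : 2 ∣ d := by
      rcases Nat.even_or_odd d with he | ho
      · exact he.two_dvd
      · exfalso
        have : Odd (d * (2*M/d)) := ho.mul hodd
        rw [hmul] at this
        rcases this with ⟨c, hc⟩
        omega
    omega
  · intro d _
    omega
  · intro d hd
    simp only [Finset.mem_filter, Nat.mem_divisors] at hd
    obtain ⟨⟨hdvd, hN0⟩, hodd⟩ := hd
    have hd0 : d ≠ 0 := by rintro rfl; simp at hdvd; omega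
    have hmul : d * (2*M / d) = 2*M := Nat.mul_div_cancel' hdvd
    have heven : 2 ∣ d := by
      rcases Nat.even_or_odd d with he | ho
      · exact he.two_dvd
      · exfalso
        have : Odd (d * (2*M/d)) := ho.mul hodd
        rw [hmul] at this
        rcases this with ⟨c, hc⟩
        omega
    have : (2 * (d/2) : ℕ) = d := by omega
    rw [show ((d:ℤ)) = ((2 * (d/2) : ℕ) : ℤ) by rw [this]]
    push_cast
    ring

lemma St_eq (N : ℕ) (hN : 1 ≤ N) : StF (N:ℤ) = sigmaStar N - 4 * sigmaStarDiv N 2 := by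
  rw [StF_eq_divisors N hN]
  rcases Nat.even_or_odd N with he | ho
  · -- N even
    obtain ⟨M, rfl⟩ := he
    have hM : 1 ≤ M := by omega
    have h2M : M + M = 2 * M := by ring
    rw [h2M] at *
    have hdvd : 2 ∣ 2 * M := ⟨M, rfl⟩
    rw [sigmaStarDiv, if_pos hdvd, Nat.mul_div_cancel_left _ (by omega)]
    have hall : ∀ d ∈ (2*M).divisors.filter (fun d => Odd ((2*M) / d)),
        eps (d:ℤ) * (d:ℤ) = -(d:ℤ) := by
      intro d hd
      simp only [Finset.mem_filter, Nat.mem_divisors] at hd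
      obtain ⟨⟨hdvd2, hN0⟩, hodd⟩ := hd
      have hd0 : d ≠ 0 := by rintro rfl; simp at hdvd2; omega
      have hmul : d * (2*M / d) = 2*M := Nat.mul_div_cancel' hdvd2
      have heven : 2 ∣ d := by
        rcases Nat.even_or_odd d with he2 | ho2
        · exact he2.two_dvd
        · exfalso
          have : Odd (d * (2*M/d)) := ho2.mul hodd
          rw [hmul] at this
          rcases this with ⟨c, hc⟩
          omega
      rw [eps_even (d := (d:ℤ)) (by omega)]
      ring
    rw [Finset.sum_congr rfl hall, Finset.sum_neg_distrib]
    have hss : sigmaStar (2*M) = 2 * sigmaStar M := sigmaStar_double M hM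
    rw [show -∑ d ∈ (2*M).divisors.filter (fun d => Odd ((2*M) / d)), (d:ℤ)
      = -(sigmaStar (2*M)) from rfl, hss]
    ring
  · -- N odd
    have hno2 : ¬ (2 ∣ N) := by
      rcases ho with ⟨c, hc⟩
      omega
    rw [sigmaStarDiv, if_neg hno2]
    have hall : ∀ d ∈ N.divisors.filter (fun d => Odd (N / d)),
        eps (d:ℤ) * (d:ℤ) = (d:ℤ) := by
      intro d hd
      simp only [Finset.mem_filter, Nat.mem_divisors] at hd
      obtain ⟨⟨hdvd2, hN0⟩, hodd⟩ := hd
      have hd0 : d ≠ 0 := by rintro rfl; simp at hdvd2; omega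
      have hmul : d * (N / d) = N := Nat.mul_div_cancel' hdvd2
      have hdodd : d % 2 = 1 := by
        rcases Nat.even_or_odd d with he2 | ho2
        · exfalso
          obtain ⟨c2, hc2⟩ := he2
          have heN : Even N := by
            rw [← hmul, hc2]
            exact ⟨c2 * (N/(c2+c2)), by ring⟩
          obtain ⟨c3, hc3⟩ := ho
          obtain ⟨c4, hc4⟩ := heN
          omega
        · exact Nat.odd_iff.1 ho2
      rw [eps_odd (d := (d:ℤ)) (by omega)]
      ring
    rw [Finset.sum_congr rfl hall]
    rw [show ∑ d ∈ N.divisors.filter (fun d => Odd (N / d)), (d:ℤ) = sigmaStar N from rfl]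
    ring

lemma rSq_cast (k N : ℕ) : (rSq k N : ℤ) = cnt k (N:ℤ) := by
  rw [rSq, cnt]
  congr 1
  have he : {x : Fin k → ℤ // ∑ i, (x i) ^ 2 = (N : ℤ)} ≃ {x // x ∈ repF k (N:ℤ)} :=
    Equiv.subtypeEquivRight (fun x => (mem_repF (v := (N:ℤ))).symm)
  rw [Nat.card_congr he, Nat.card_eq_finsetCard]

end Convert

theorem sum_of_squares_recursion (n k : ℕ) (hn : 0 < n) (hk : 0 < k) :
    (n : ℤ) * rSq k n =
      2 * k * (sigmaStar n - 4 * sigmaStarDiv n 2 +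
        ∑ j ∈ Finset.Icc 1 (n - 1),
          (rSq k j : ℤ) * (sigmaStar (n - j) - 4 * sigmaStarDiv (n - j) 2)) := by
  obtain ⟨K, rfl⟩ : ∃ K, k = K + 1 := ⟨k - 1, by omega⟩
  have hm : (1:ℤ) ≤ (n:ℤ) := by exact_mod_cast hn
  have hmain := main_chain (K := K) (m := (n:ℤ)) hm
  -- split off the top term l = n
  have hins : Finset.Icc (1:ℤ) (n:ℤ) = insert (n:ℤ) (Finset.Icc 1 ((n:ℤ) - 1)) := by
    ext x
    simp only [Finset.mem_Icc, Finset.mem_insert]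
    omega
  have hnot : (n:ℤ) ∉ Finset.Icc (1:ℤ) ((n:ℤ) - 1) := by
    simp only [Finset.mem_Icc]
    omega
  rw [hins, Finset.sum_insert hnot] at hmain
  have htop : StF (n:ℤ) * cnt (K+1) ((n:ℤ) - (n:ℤ))
      = sigmaStar n - 4 * sigmaStarDiv n 2 := by
    rw [show (n:ℤ) - (n:ℤ) = 0 by ring, cnt_zero, St_eq n hn, mul_one]
  have hsum : ∑ l ∈ Finset.Icc (1:ℤ) ((n:ℤ) - 1), StF l * cnt (K+1) ((n:ℤ) - l)
      = ∑ j ∈ Finset.Icc 1 (n - 1),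
          (rSq (K+1) j : ℤ) * (sigmaStar (n - j) - 4 * sigmaStarDiv (n - j) 2) := by
    refine Finset.sum_nbij' (i := fun l => n - l.toNat) (j := fun j => (n:ℤ) - (j:ℤ))
      ?_ ?_ ?_ ?_ ?_
    · intro l hl
      simp only [Finset.mem_Icc] at hl ⊢
      omega
    · intro j hj
      simp only [Finset.mem_Icc] at hj ⊢
      omega
    · intro l hl
      simp only [Finset.mem_Icc] at hl
      omega
    · intro j hj
      simp only [Finset.mem_Icc] at hj
      omega
    · intro l hl
      simp only [Finset.mem_Icc] at hl
      have h1 : (n : ℤ) - l = ((n - l.toNat : ℕ) : ℤ) := by omega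
      have h2 : n - (n - l.toNat) = l.toNat := by omega
      have h3 : l = ((l.toNat : ℕ) : ℤ) := by omega
      rw [h2, rSq_cast, ← h1, show StF l = StF ((l.toNat : ℕ) : ℤ) from by rw [← h3],
        St_eq l.toNat (by omega)]
      ring
  rw [htop, hsum] at hmain
  rw [rSq_cast, hmain]
  push_cast
  ring
end
end

section
/- If p is a prime with p ≡ 3 (mod 4), then ∑_{j=1}^{p-1} r_2(j)·(σ*(p-j) - 4σ*((p-j)/2)) = -p - 1. -/
set_option maxHeartbeats 1000000


open Finset


abbrev Q4 := (ℤ × ℤ) × (ℤ × ℤ)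

noncomputable def solSet (P : ℤ) : Finset Q4 :=
  ((Icc (-P) P ×ˢ Icc (-P) P) ×ˢ (Icc 1 P ×ˢ Icc 1 P)).filter
    (fun q => q.1.1 ^ 2 + q.1.2 ^ 2 + q.2.1 * q.2.2 = P ∧ Odd q.2.2)

lemma mem_solSet {P x y a b : ℤ} :
    (((x, y), (a, b)) : Q4) ∈ solSet P ↔ (-P ≤ x ∧ x ≤ P) ∧ (-P ≤ y ∧ y ≤ P) ∧
      (1 ≤ a ∧ a ≤ P) ∧ (1 ≤ b ∧ b ≤ P) ∧
      x ^ 2 + y ^ 2 + a * b = P ∧ Odd b := by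
  simp only [solSet, mem_filter, mem_product, mem_Icc]
  tauto

def sgn2 (q : Q4) : ℤ := if Even (q.1.1 + q.1.2) then 1 else -1

def wD (q : Q4) : ℤ := sgn2 q * (q.2.1 - q.1.1)

def wX (q : Q4) : ℤ := sgn2 q * q.1.1

def wA (q : Q4) : ℤ := if Even q.2.1 then -q.2.1 else q.2.1

lemma sgn2_mk (x y : ℤ) (z : ℤ × ℤ) :
    sgn2 ((x, y), z) = if Even (x + y) then 1 else -1 := rfl

lemma wD_mk (x y a b : ℤ) : wD ((x, y), (a, b)) = sgn2 ((x, y), (a, b)) * (a - x) := rfl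

lemma wX_mk (x y a b : ℤ) : wX ((x, y), (a, b)) = sgn2 ((x, y), (a, b)) * x := rfl

lemma wA_mk (x y a b : ℤ) : wA ((x, y), (a, b)) = if Even a then -a else a := rfl

def gmap (q : Q4) : Q4 :=
  if 2 * q.1.1 + q.2.2 + 1 ≤ q.2.1 then
    ((-q.1.1 - q.2.2, q.1.2), (q.2.1 - 2 * q.1.1 - q.2.2, q.2.2))
  else if 4 * (q.2.1 - q.1.1) + 1 ≤ q.2.2 then
    ((2 * q.2.1 - q.1.1, q.1.2), (q.2.1, q.2.2 + 4 * (q.1.1 - q.2.1)))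
  else
    ((q.2.2 + 3 * q.1.1 - 2 * q.2.1, q.1.2),
      (q.2.2 + 2 * q.1.1 - q.2.1, 4 * (q.2.1 - q.1.1) - q.2.2))

lemma gmap_mk (x y a b : ℤ) : gmap ((x, y), (a, b)) =
    if 2 * x + b + 1 ≤ a then ((-x - b, y), (a - 2 * x - b, b))
    else if 4 * (a - x) + 1 ≤ b then ((2 * a - x, y), (a, b + 4 * (x - a)))
    else ((b + 3 * x - 2 * a, y), (b + 2 * x - a, 4 * (a - x) - b)) := rfl

lemma int_sq_mod4 (t : ℤ) : ∃ u, t ^ 2 = 4 * u ∨ t ^ 2 = 4 * u + 1 := by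
  rcases Int.even_or_odd t with ⟨k, hk⟩ | ⟨k, hk⟩
  · exact ⟨k * k, Or.inl (by subst hk; ring)⟩
  · exact ⟨k * k + k, Or.inr (by subst hk; ring)⟩

lemma abs_le_of_sq_le {t P : ℤ} (hP : 1 ≤ P) (h : t ^ 2 ≤ P) : -P ≤ t ∧ t ≤ P := by
  constructor <;> nlinarith [sq_nonneg (t - 1), sq_nonneg (t + 1)]

lemma sgn2_flip {x y x' y' : ℤ} (z z' : ℤ × ℤ) (h : (x + y) % 2 ≠ (x' + y') % 2) :
    sgn2 ((x', y'), z') = - sgn2 ((x, y), z) := by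
  rw [sgn2_mk, sgn2_mk]
  split_ifs with e1 e2 e2 <;> try norm_num
  · rw [Int.even_iff] at e1 e2; omega
  · rw [Int.even_iff] at e1 e2; omega

lemma sgn2_same {x y x' y' : ℤ} (z z' : ℤ × ℤ) (h : (x + y) % 2 = (x' + y') % 2) :
    sgn2 ((x', y'), z') = sgn2 ((x, y), z) := by
  rw [sgn2_mk, sgn2_mk]
  split_ifs with e1 e2 e2 <;> try norm_num
  · rw [Int.even_iff] at e1 e2; omega
  · rw [Int.even_iff] at e1 e2; omega

lemma mem_solSet_of {P : ℤ} (hP : 1 ≤ P) (x y a b : ℤ)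
    (heq : x ^ 2 + y ^ 2 + a * b = P)
    (ha : 1 ≤ a) (hb : 1 ≤ b) (hodd : Odd b) : (((x, y), (a, b)) : Q4) ∈ solSet P := by
  have hab : 1 ≤ a * b := one_le_mul_of_one_le_of_one_le ha hb
  have hx2 : x ^ 2 ≤ P := by nlinarith [sq_nonneg y]
  have hy2 : y ^ 2 ≤ P := by nlinarith [sq_nonneg x]
  have hxb := abs_le_of_sq_le hP hx2
  have hyb := abs_le_of_sq_le hP hy2
  have haP : a ≤ P := by nlinarith [sq_nonneg x, sq_nonneg y]
  have hbP : b ≤ P := by nlinarith [sq_nonneg x, sq_nonneg y]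
  exact mem_solSet.2 ⟨hxb, hyb, ⟨ha, haP⟩, ⟨hb, hbP⟩, heq, hodd⟩

section Main

variable {P : ℤ} (hP4 : P % 4 = 3) (hP : 1 ≤ P)

include hP4

lemma no_two_sq (u v : ℤ) : u ^ 2 + v ^ 2 ≠ P := by
  obtain ⟨s, hs⟩ := int_sq_mod4 u
  obtain ⟨t, ht⟩ := int_sq_mod4 v
  omega

include hP

lemma gmap_spec {q : Q4} (hq : q ∈ solSet P) :
    gmap q ∈ solSet P ∧ gmap (gmap q) = q ∧ wD (gmap q) = - wD q ∧
      (gmap q = q → wD q = 0) := by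
  obtain ⟨⟨x, y⟩, ⟨a, b⟩⟩ := q
  obtain ⟨hxb, hyb, ⟨ha, haP⟩, ⟨hb, hbP⟩, heq, hodd⟩ := mem_solSet.1 hq
  have hb2 : b % 2 = 1 := Int.odd_iff.1 hodd
  by_cases h1 : 2 * x + b + 1 ≤ a
  · -- region 2 : the sigma_e involution
    have hg : gmap ((x, y), (a, b)) = ((-x - b, y), (a - 2 * x - b, b)) := by
      rw [gmap_mk, if_pos h1]
    have heq' : (-x - b) ^ 2 + y ^ 2 + (a - 2 * x - b) * b = P := by linear_combination heq
    have hmem : gmap ((x, y), (a, b)) ∈ solSet P := by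
      rw [hg]
      exact mem_solSet_of hP _ _ _ _ heq' (by omega) hb hodd
    have hg2 : gmap ((-x - b, y), (a - 2 * x - b, b)) = ((x, y), (a, b)) := by
      have hc : 2 * (-x - b) + b + 1 ≤ a - 2 * x - b := by omega
      rw [gmap_mk, if_pos hc]
      simp only [Prod.mk.injEq]
      refine ⟨⟨by ring, ?_⟩, by ring, ?_⟩ <;> trivial
    refine ⟨hmem, by rw [hg, hg2], ?_, ?_⟩
    · rw [hg, wD_mk, wD_mk,
        sgn2_flip (x := x) (y := y) _ _ (by omega)]
      ring
    · rw [hg]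
      intro hfix
      have : -x - b = x := congrArg (fun t : Q4 => t.1.1) hfix
      omega
  · by_cases h2 : 4 * (a - x) + 1 ≤ b
    · -- region 3 : the omega involution
      have hg : gmap ((x, y), (a, b)) = ((2 * a - x, y), (a, b + 4 * (x - a))) := by
        rw [gmap_mk, if_neg h1, if_pos h2]
      have heq' : (2 * a - x) ^ 2 + y ^ 2 + a * (b + 4 * (x - a)) = P := by
        linear_combination heq
      have hodd' : Odd (b + 4 * (x - a)) := by
        rcases hodd with ⟨c, hc⟩; exact ⟨c + 2 * (x - a), by omega⟩
      have hmem : gmap ((x, y), (a, b)) ∈ solSet P := by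
        rw [hg]
        exact mem_solSet_of hP _ _ _ _ heq' ha (by omega) hodd'
      have hg2 : gmap ((2 * a - x, y), (a, b + 4 * (x - a))) = ((x, y), (a, b)) := by
        have hc1 : ¬ (2 * (2 * a - x) + (b + 4 * (x - a)) + 1 ≤ a) := by omega
        have hc2 : 4 * (a - (2 * a - x)) + 1 ≤ b + 4 * (x - a) := by omega
        rw [gmap_mk, if_neg hc1, if_pos hc2]
        simp only [Prod.mk.injEq]
        refine ⟨⟨by ring, ?_⟩, ?_, by ring⟩ <;> trivial
      refine ⟨hmem, by rw [hg, hg2], ?_, ?_⟩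
      · rw [hg, wD_mk, wD_mk, sgn2_same (x := x) (y := y) _ _ (by omega)]
        ring
      · rw [hg]
        intro hfix
        have hax : 2 * a - x = x := congrArg (fun t : Q4 => t.1.1) hfix
        rw [wD_mk]
        have : a - x = 0 := by omega
        rw [this]; ring
    · -- region L : the kappa involution
      have hne : a ≠ 2 * x + b := by
        intro hE
        apply no_two_sq hP4 y (x + b)
        linear_combination heq - (b : ℤ) * hE
      have hbne : b ≠ 4 * (a - x) := by omega
      have hg : gmap ((x, y), (a, b)) =
          ((b + 3 * x - 2 * a, y), (b + 2 * x - a, 4 * (a - x) - b)) := by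
        rw [gmap_mk, if_neg h1, if_neg h2]
      have heq' : (b + 3 * x - 2 * a) ^ 2 + y ^ 2 + (b + 2 * x - a) * (4 * (a - x) - b) = P := by
        linear_combination heq
      have hodd' : Odd (4 * (a - x) - b) := by
        rcases hodd with ⟨c, hc⟩; exact ⟨2 * (a - x) - c - 1, by omega⟩
      have hmem : gmap ((x, y), (a, b)) ∈ solSet P := by
        rw [hg]
        exact mem_solSet_of hP _ _ _ _ heq' (by omega) (by omega) hodd'
      have hg2 : gmap ((b + 3 * x - 2 * a, y), (b + 2 * x - a, 4 * (a - x) - b)) =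
          ((x, y), (a, b)) := by
        have hc1 : ¬ (2 * (b + 3 * x - 2 * a) + (4 * (a - x) - b) + 1 ≤ b + 2 * x - a) := by
          omega
        have hc2 : ¬ (4 * ((b + 2 * x - a) - (b + 3 * x - 2 * a)) + 1 ≤ 4 * (a - x) - b) := by
          omega
        rw [gmap_mk, if_neg hc1, if_neg hc2]
        simp only [Prod.mk.injEq]
        refine ⟨⟨by ring, ?_⟩, by ring, by ring⟩
        trivial
      refine ⟨hmem, by rw [hg, hg2], ?_, ?_⟩
      · rw [hg, wD_mk, wD_mk, sgn2_flip (x := x) (y := y) _ _ (by omega)]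
        ring
      · rw [hg]
        intro hfix
        have : b + 3 * x - 2 * a = x := congrArg (fun t : Q4 => t.1.1) hfix
        omega

lemma sum_wD_zero : ∑ q ∈ solSet P, wD q = 0 := by
  refine Finset.sum_involution (fun q _ => gmap q) ?_ ?_ ?_ ?_
  · intro q hq
    show wD q + wD (gmap q) = 0
    have := (gmap_spec hP4 hP hq).2.2.1
    omega
  · intro q hq hne hfix
    exact hne ((gmap_spec hP4 hP hq).2.2.2 hfix)

  · intro q hq
    exact (gmap_spec hP4 hP hq).1
  · intro q hq
    exact (gmap_spec hP4 hP hq).2.1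

end Main

lemma sum_wX_zero {P : ℤ} : ∑ q ∈ solSet P, wX q = 0 := by
  refine Finset.sum_involution (fun q _ => ((-q.1.1, q.1.2), q.2)) ?_ ?_ ?_ ?_
  · rintro ⟨⟨x, y⟩, z⟩ hq
    show wX ((x, y), z) + wX ((-x, y), z) = 0
    obtain ⟨a, b⟩ := z
    rw [wX_mk, wX_mk, sgn2_same (x := x) (y := y) (x' := -x) (y' := y) _ _ (by omega)]
    ring
  · rintro ⟨⟨x, y⟩, z⟩ hq hne hfix
    apply hne
    obtain ⟨a, b⟩ := z
    have : -x = x := congrArg (fun t : Q4 => t.1.1) hfix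
    have hx0 : x = 0 := by omega
    rw [wX_mk, hx0]
    ring
  · rintro ⟨⟨x, y⟩, ⟨a, b⟩⟩ hq
    show (((-x, y), (a, b)) : Q4) ∈ solSet P
    rw [mem_solSet] at hq ⊢
    obtain ⟨hxb, hyb, hab, hbb, heq, hodd⟩ := hq
    exact ⟨by omega, hyb, hab, hbb, by linear_combination heq, hodd⟩
  · rintro ⟨⟨x, y⟩, z⟩ hq
    show ((- -x, y), z) = ((x, y), z)
    simp



def epsw (w : ℤ × ℤ) : ℤ := if Even w.1 then -w.1 else w.1

noncomputable def WZ (m : ℕ) : Finset (ℤ × ℤ) :=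
  ((Icc 1 (m : ℤ)) ×ˢ (Icc 1 (m : ℤ))).filter (fun w => w.1 * w.2 = (m : ℤ) ∧ Odd w.2)

noncomputable def RZ (j : ℕ) : Finset (ℤ × ℤ) :=
  ((Icc (-(j : ℤ)) j) ×ˢ (Icc (-(j : ℤ)) j)).filter (fun z => z.1 ^ 2 + z.2 ^ 2 = (j : ℤ))

lemma mem_WZ {m : ℕ} {a b : ℤ} :
    ((a, b) : ℤ × ℤ) ∈ WZ m ↔ (1 ≤ a ∧ a ≤ m) ∧ (1 ≤ b ∧ b ≤ m) ∧ a * b = m ∧ Odd b := by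
  simp only [WZ, mem_filter, mem_product, mem_Icc]
  tauto

lemma mem_RZ {j : ℕ} {x y : ℤ} :
    ((x, y) : ℤ × ℤ) ∈ RZ j ↔ (-(j:ℤ) ≤ x ∧ x ≤ j) ∧ (-(j:ℤ) ≤ y ∧ y ≤ j) ∧
      x ^ 2 + y ^ 2 = (j : ℤ) := by
  simp only [RZ, mem_filter, mem_product, mem_Icc]
  tauto

lemma sigmaStar_eq_WZ (m : ℕ) (hm : m ≠ 0) : sigmaStar m = ∑ w ∈ WZ m, w.1 := by
  have h1 : sigmaStar m
      = ∑ i ∈ m.divisorsAntidiagonal, (if Odd i.2 then (i.1 : ℤ) else 0) := by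
    rw [Nat.sum_divisorsAntidiagonal (fun a b => if Odd b then (a : ℤ) else 0), sigmaStar,
      Finset.sum_filter]
  rw [h1, ← Finset.sum_filter]
  refine Finset.sum_nbij' (i := fun w => ((w.1 : ℤ), (w.2 : ℤ)))
    (j := fun w => (w.1.toNat, w.2.toNat)) ?_ ?_ ?_ ?_ ?_
  · rintro ⟨a, b⟩ h
    rw [mem_filter, Nat.mem_divisorsAntidiagonal] at h
    obtain ⟨⟨hab, -⟩, hodd⟩ := h
    have ha : 1 ≤ a := by
      rcases Nat.eq_zero_or_pos a with rfl | h
      · rw [zero_mul] at hab; omega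
      · exact h
    have hb : 1 ≤ b := by
      rcases Nat.eq_zero_or_pos b with rfl | h
      · rw [mul_zero] at hab; omega
      · exact h
    have ham : a ≤ m := Nat.le_of_dvd (by omega) ⟨b, hab.symm⟩
    have hbm : b ≤ m := Nat.le_of_dvd (by omega) ⟨a, by rw [← hab, mul_comm]⟩
    rw [mem_WZ]
    refine ⟨⟨by exact_mod_cast ha, by exact_mod_cast ham⟩,
      ⟨by exact_mod_cast hb, by exact_mod_cast hbm⟩, by exact_mod_cast hab, ?_⟩
    exact_mod_cast hodd
  · rintro ⟨a, b⟩ h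
    rw [mem_WZ] at h
    obtain ⟨⟨ha1, ham⟩, ⟨hb1, hbm⟩, hab, hodd⟩ := h
    have ha' : (a.toNat : ℤ) = a := Int.toNat_of_nonneg (by omega)
    have hb' : (b.toNat : ℤ) = b := Int.toNat_of_nonneg (by omega)
    rw [mem_filter, Nat.mem_divisorsAntidiagonal]
    refine ⟨⟨?_, hm⟩, ?_⟩
    · have : ((a.toNat * b.toNat : ℕ) : ℤ) = (m : ℤ) := by push_cast [ha', hb']; exact hab
      exact_mod_cast this
    · have : Odd (b.toNat : ℤ) := hb' ▸ hodd
      exact_mod_cast this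
  · rintro ⟨a, b⟩ h
    simp
  · rintro ⟨a, b⟩ h
    rw [mem_WZ] at h
    have ha' : (a.toNat : ℤ) = a := Int.toNat_of_nonneg (by omega)
    have hb' : (b.toNat : ℤ) = b := Int.toNat_of_nonneg (by omega)
    simp [ha', hb']
  · rintro ⟨a, b⟩ h
    rfl

lemma WZ_even_fst {k : ℕ} (hk : k ≠ 0) {a b : ℤ} (h : ((a, b) : ℤ × ℤ) ∈ WZ (2 * k)) :
    Even a := by
  rw [mem_WZ] at h
  obtain ⟨-, -, hab, hodd⟩ := h
  have heven : Even (a * b) := by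
    rw [hab]
    exact ⟨(k : ℤ), by push_cast; ring⟩
  rcases Int.even_mul.1 heven with h | h
  · exact h
  · exact absurd hodd (Int.not_odd_iff_even.2 h)

lemma sigmaStar_two_mul (k : ℕ) (hk : k ≠ 0) : sigmaStar (2 * k) = 2 * sigmaStar k := by
  rw [sigmaStar_eq_WZ k hk, sigmaStar_eq_WZ (2 * k) (by omega), Finset.mul_sum]
  refine Finset.sum_nbij' (i := fun w => (w.1 / 2, w.2)) (j := fun w => (2 * w.1, w.2))
    ?_ ?_ ?_ ?_ ?_
  · rintro ⟨a, b⟩ h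
    have hev : Even a := WZ_even_fst hk h
    rw [mem_WZ] at h ⊢
    obtain ⟨⟨ha1, ham⟩, ⟨hb1, hbm⟩, hab, hodd⟩ := h
    have ha2 : a % 2 = 0 := Int.even_iff.1 hev
    have hd : 2 * (a / 2) = a := by omega
    have hcast : ((2 * k : ℕ) : ℤ) = 2 * (k : ℤ) := by push_cast; ring
    rw [hcast] at ham hbm hab
    have habk : (a / 2) * b = (k : ℤ) := by
      apply mul_left_cancel₀ (a := (2 : ℤ)) (by norm_num)
      rw [← mul_assoc, hd, hab]
    refine ⟨⟨by omega, ?_⟩, ⟨hb1, ?_⟩, habk, hodd⟩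
    · nlinarith [habk, hb1, (by omega : 1 ≤ a / 2)]
    · nlinarith [habk, (by omega : 1 ≤ a / 2)]
  · rintro ⟨a, b⟩ h
    rw [mem_WZ] at h ⊢
    obtain ⟨⟨ha1, ham⟩, ⟨hb1, hbm⟩, hab, hodd⟩ := h
    have hcast : ((2 * k : ℕ) : ℤ) = 2 * (k : ℤ) := by push_cast; ring
    rw [hcast]
    refine ⟨⟨by omega, by omega⟩, ⟨hb1, by omega⟩, by rw [mul_assoc, hab], hodd⟩
  · rintro ⟨a, b⟩ h
    have hev : Even a := WZ_even_fst hk h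
    have ha2 : a % 2 = 0 := Int.even_iff.1 hev
    have : 2 * (a / 2) = a := by omega
    simp only [Prod.mk.injEq]
    refine ⟨this, ?_⟩ <;> trivial
  · rintro ⟨a, b⟩ h
    simp only [Prod.mk.injEq]
    refine ⟨by omega, ?_⟩ <;> trivial
  · rintro ⟨a, b⟩ h
    have hev : Even a := WZ_even_fst hk h
    have ha2 : a % 2 = 0 := Int.even_iff.1 hev
    show a = 2 * (a / 2)
    omega

lemma weight_eq (m : ℕ) (hm : m ≠ 0) :
    sigmaStar m - 4 * sigmaStarDiv m 2 = ∑ w ∈ WZ m, epsw w := by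
  rcases Nat.even_or_odd m with ⟨k, hk⟩ | hodd
  · -- m even, m = 2k
    have hk0 : k ≠ 0 := by omega
    have hm2 : m = 2 * k := by omega
    have hdvd : 2 ∣ m := ⟨k, hm2⟩
    have hdiv : m / 2 = k := by omega
    rw [sigmaStarDiv, if_pos hdvd, hdiv]
    have hsum : ∑ w ∈ WZ m, epsw w = ∑ w ∈ WZ m, (-w.1) := by
      refine Finset.sum_congr rfl ?_
      rintro ⟨a, b⟩ h
      have hev : Even a := WZ_even_fst hk0 (by rw [← hm2]; exact h)
      simp only [epsw, if_pos hev]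
    rw [hsum, Finset.sum_neg_distrib, ← sigmaStar_eq_WZ m hm, hm2,
      sigmaStar_two_mul k hk0]
    ring
  · -- m odd
    have hm1 : m % 2 = 1 := Nat.odd_iff.1 hodd
    have hndvd : ¬ (2 ∣ m) := by intro ⟨c, hc⟩; omega
    rw [sigmaStarDiv, if_neg hndvd]
    have hsum : ∑ w ∈ WZ m, epsw w = ∑ w ∈ WZ m, w.1 := by
      refine Finset.sum_congr rfl ?_
      rintro ⟨a, b⟩ h
      rw [mem_WZ] at h
      obtain ⟨-, -, hab, hoddb⟩ := h
      have hoddm : Odd ((m : ℕ) : ℤ) := by exact_mod_cast hodd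
      have : Odd (a * b) := hab ▸ hoddm
      have hodda : Odd a := (Int.odd_mul.1 this).1
      have hna : ¬ Even a := Int.not_even_iff_odd.2 hodda
      simp only [epsw, if_neg hna]
    rw [hsum, ← sigmaStar_eq_WZ m hm]
    ring

lemma rSq_two (j : ℕ) (hj : j ≠ 0) : rSq 2 j = (RZ j).card := by
  have hj1 : (1 : ℤ) ≤ (j : ℤ) := by omega
  rw [rSq]
  have e : {x : Fin 2 → ℤ // ∑ i, (x i) ^ 2 = (j : ℤ)} ≃ {z : ℤ × ℤ // z ∈ RZ j} :=
    { toFun := fun v => ⟨(v.1 0, v.1 1), by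
        obtain ⟨v, hv⟩ := v
        rw [Fin.sum_univ_two] at hv
        rw [mem_RZ]
        have h0 : v 0 ^ 2 ≤ (j : ℤ) := by nlinarith [sq_nonneg (v 1)]
        have h1 : v 1 ^ 2 ≤ (j : ℤ) := by nlinarith [sq_nonneg (v 0)]
        have b0 : -(j:ℤ) ≤ v 0 ∧ v 0 ≤ j := by
          constructor <;> nlinarith [sq_nonneg (v 0 - 1), sq_nonneg (v 0 + 1)]
        have b1 : -(j:ℤ) ≤ v 1 ∧ v 1 ≤ j := by
          constructor <;> nlinarith [sq_nonneg (v 1 - 1), sq_nonneg (v 1 + 1)]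
        exact ⟨b0, b1, hv⟩⟩
      invFun := fun z => ⟨![z.1.1, z.1.2], by
        obtain ⟨⟨z1, z2⟩, hz⟩ := z
        rw [mem_RZ] at hz
        rw [Fin.sum_univ_two]
        simpa using hz.2.2⟩
      left_inv := fun v => Subtype.ext (by
        funext i
        fin_cases i <;> rfl)
      right_inv := fun z => Subtype.ext rfl }
  rw [Nat.card_congr e, Nat.card_eq_finsetCard]


lemma int_sq_mod2 (t : ℤ) : t ^ 2 % 2 = t % 2 := by
  rcases Int.even_or_odd t with ⟨k, hk⟩ | ⟨k, hk⟩ <;> subst hk <;> ring_nf <;> omega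

lemma sum_wA_zero {P : ℤ} (hP4 : P % 4 = 3) (hP : 1 ≤ P) :
    ∑ q ∈ solSet P, wA q = 0 := by
  have hpt : ∀ q ∈ solSet P, wA q = wD q + wX q := by
    rintro ⟨⟨x, y⟩, ⟨a, b⟩⟩ hq
    obtain ⟨-, -, ⟨ha, -⟩, ⟨hb, -⟩, heq, hodd⟩ := mem_solSet.1 hq
    obtain ⟨c, hc⟩ := hodd
    have heq2 : x ^ 2 + y ^ 2 + 2 * (a * c) + a = P := by
      rw [hc] at heq; linear_combination heq
    have hx2 : x ^ 2 % 2 = x % 2 := int_sq_mod2 x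
    have hy2 : y ^ 2 % 2 = y % 2 := int_sq_mod2 y
    have hP2 : P % 2 = 1 := by omega
    rw [wA_mk, wD_mk, wX_mk, sgn2_mk]
    by_cases hxy : Even (x + y)
    · have hxy2 : (x + y) % 2 = 0 := Int.even_iff.1 hxy
      have hna : ¬ Even a := by rw [Int.even_iff]; omega
      rw [if_pos hxy, if_neg hna]; ring
    · have hxy2 : ¬ ((x + y) % 2 = 0) := fun h => hxy (Int.even_iff.2 h)
      have hna : Even a := by rw [Int.even_iff]; omega
      rw [if_neg hxy, if_pos hna]; ring
  rw [Finset.sum_congr rfl hpt, Finset.sum_add_distrib, sum_wD_zero hP4 hP, sum_wX_zero]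
  norm_num

theorem prime_three_mod_four (p : ℕ) (hp : p.Prime) (h3 : p % 4 = 3) :
    (∑ j ∈ Finset.Icc 1 (p - 1),
        (rSq 2 j : ℤ) * (sigmaStar (p - j) - 4 * sigmaStarDiv (p - j) 2)) = -p - 1 := by
  have hp3 : 3 ≤ p := by omega
  have hP4 : ((p : ℕ) : ℤ) % 4 = 3 := by omega
  have hP1 : (1 : ℤ) ≤ ((p : ℕ) : ℤ) := by omega
  -- Step 1 : rewrite each summand as a sum over the product set
  have hstep1 : ∀ j ∈ Finset.Icc 1 (p - 1),
      (rSq 2 j : ℤ) * (sigmaStar (p - j) - 4 * sigmaStarDiv (p - j) 2)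
        = ∑ q ∈ (RZ j) ×ˢ (WZ (p - j)), wA q := by
    intro j hj
    rw [Finset.mem_Icc] at hj
    have hj0 : j ≠ 0 := by omega
    have hpj : p - j ≠ 0 := by omega
    rw [rSq_two j hj0, weight_eq (p - j) hpj, Finset.sum_product]
    have hinner : ∀ z ∈ RZ j, (∑ w ∈ WZ (p - j), wA (z, w)) = ∑ w ∈ WZ (p - j), epsw w :=
      fun z _ => rfl
    rw [Finset.sum_congr rfl hinner, Finset.sum_const, nsmul_eq_mul]
  rw [Finset.sum_congr rfl hstep1]
  -- Step 2 : collapse to a sum over a biUnion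
  have hdisj : (↑(Finset.Icc 1 (p - 1)) : Set ℕ).PairwiseDisjoint
      (fun j => (RZ j) ×ˢ (WZ (p - j))) := by
    intro i _ j _ hne
    simp only [Function.onFun]
    rw [Finset.disjoint_left]
    rintro ⟨⟨x, y⟩, ⟨a, b⟩⟩ hqi hqj
    rw [Finset.mem_product] at hqi hqj
    have h1 := (mem_RZ.1 hqi.1).2.2
    have h2 := (mem_RZ.1 hqj.1).2.2
    have hij : ((i : ℕ) : ℤ) = ((j : ℕ) : ℤ) := by rw [← h1, ← h2]
    exact hne (by exact_mod_cast hij)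
  rw [← Finset.sum_biUnion hdisj]
  -- Step 3 : relate the biUnion to the full solution set
  set C : Finset Q4 := (({((0 : ℤ), (0 : ℤ))} : Finset (ℤ × ℤ))) ×ˢ WZ p with hCdef
  have hsplitEq : (Finset.Icc 1 (p - 1)).biUnion (fun j => (RZ j) ×ˢ (WZ (p - j))) ∪ C
      = solSet ((p : ℕ) : ℤ) := by
    ext ⟨⟨x, y⟩, ⟨a, b⟩⟩
    constructor
    · intro hq
      rcases Finset.mem_union.1 hq with hq | hq
      · obtain ⟨j, hj, hq⟩ := Finset.mem_biUnion.1 hq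
        rw [Finset.mem_Icc] at hj
        rw [Finset.mem_product] at hq
        obtain ⟨hz, hw⟩ := hq
        obtain ⟨⟨hx1, hx2⟩, ⟨hy1, hy2⟩, hcirc⟩ := mem_RZ.1 hz
        obtain ⟨⟨ha1, ha2⟩, ⟨hb1, hb2⟩, hab, hodd⟩ := mem_WZ.1 hw
        have hcast : ((p - j : ℕ) : ℤ) = ((p : ℕ) : ℤ) - ((j : ℕ) : ℤ) := by omega
        rw [hcast] at ha2 hb2 hab
        rw [mem_solSet]
        refine ⟨⟨by omega, by omega⟩, ⟨by omega, by omega⟩, ⟨by omega, by omega⟩,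
          ⟨by omega, by omega⟩, by linear_combination hcirc + hab, hodd⟩
      · rw [Finset.mem_product, Finset.mem_singleton, Prod.mk.injEq] at hq
        obtain ⟨⟨rfl, rfl⟩, hw⟩ := hq
        obtain ⟨⟨ha1, ha2⟩, ⟨hb1, hb2⟩, hab, hodd⟩ := mem_WZ.1 hw
        rw [mem_solSet]
        refine ⟨⟨by omega, by omega⟩, ⟨by omega, by omega⟩, ⟨ha1, ha2⟩, ⟨hb1, hb2⟩,
          by linear_combination hab, hodd⟩
    · intro hq
      obtain ⟨⟨hx1, hx2⟩, ⟨hy1, hy2⟩, ⟨ha1, ha2⟩, ⟨hb1, hb2⟩, heq, hodd⟩ := mem_solSet.1 hq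
      by_cases h0 : x = 0 ∧ y = 0
      · refine Finset.mem_union_right _ ?_
        obtain ⟨rfl, rfl⟩ := h0
        rw [Finset.mem_product, Finset.mem_singleton]
        exact ⟨rfl, mem_WZ.2 ⟨⟨ha1, ha2⟩, ⟨hb1, hb2⟩, by linear_combination heq, hodd⟩⟩
      · refine Finset.mem_union_left _ ?_
        have hs1 : 1 ≤ x ^ 2 + y ^ 2 := by
          rcases not_and_or.1 h0 with hx | hy
          · nlinarith [Int.one_le_abs hx, sq_abs x, sq_nonneg y]
          · nlinarith [Int.one_le_abs hy, sq_abs y, sq_nonneg x]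
        have hab1 : 1 ≤ a * b := by nlinarith
        have hs2 : x ^ 2 + y ^ 2 ≤ ((p : ℕ) : ℤ) - 1 := by omega
        have hjnn : (0 : ℤ) ≤ x ^ 2 + y ^ 2 := by positivity
        set j : ℕ := (x ^ 2 + y ^ 2).toNat with hjdef
        have hjz : ((j : ℕ) : ℤ) = x ^ 2 + y ^ 2 := Int.toNat_of_nonneg hjnn
        refine Finset.mem_biUnion.2 ⟨j, Finset.mem_Icc.2 ⟨by omega, by omega⟩, ?_⟩
        rw [Finset.mem_product]
        constructor
        · rw [mem_RZ, hjz]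
          refine ⟨⟨?_, ?_⟩, ⟨?_, ?_⟩, rfl⟩ <;>
            nlinarith [Int.le_self_sq x, Int.le_self_sq (-x), Int.le_self_sq y,
              Int.le_self_sq (-y), sq_nonneg x, sq_nonneg y]
        · rw [mem_WZ]
          have hcast : ((p - j : ℕ) : ℤ) = ((p : ℕ) : ℤ) - ((j : ℕ) : ℤ) := by omega
          rw [hcast, hjz]
          refine ⟨⟨ha1, by nlinarith⟩, ⟨hb1, by nlinarith⟩, by linear_combination heq, hodd⟩
  have hdisj2 : Disjoint ((Finset.Icc 1 (p - 1)).biUnion fun j => (RZ j) ×ˢ (WZ (p - j))) C := by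
    rw [Finset.disjoint_left]
    rintro ⟨⟨x, y⟩, ⟨a, b⟩⟩ hq hc
    obtain ⟨j, hj, hq⟩ := Finset.mem_biUnion.1 hq
    rw [Finset.mem_Icc] at hj
    rw [Finset.mem_product] at hq hc
    have hcirc := (mem_RZ.1 hq.1).2.2
    rw [Finset.mem_singleton, Prod.mk.injEq] at hc
    obtain ⟨⟨rfl, rfl⟩, -⟩ := hc
    have : ((j : ℕ) : ℤ) = 0 := by linarith [hcirc.symm]
    omega
  -- Step 4 : evaluate
  have hC : ∑ q ∈ C, wA q = ((p : ℕ) : ℤ) + 1 := by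
    rw [hCdef, Finset.sum_product, Finset.sum_singleton]
    have hpt : ∀ w ∈ WZ p, wA (((0 : ℤ), (0 : ℤ)), w) = epsw w := fun w _ => rfl
    rw [Finset.sum_congr rfl hpt, ← weight_eq p (by omega)]
    have hdvd : ¬ (2 ∣ p) := by rintro ⟨c, hc⟩; omega
    rw [sigmaStarDiv, if_neg hdvd]
    have hdivs : p.divisors = {1, p} := hp.divisors
    rw [sigmaStar, hdivs]
    have h1 : Odd (p / 1) := by rw [Nat.div_one]; exact Nat.odd_iff.2 (by omega)
    have h2 : Odd (p / p) := by rw [Nat.div_self (by omega)]; exact ⟨0, rfl⟩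
    rw [Finset.filter_insert, if_pos h1, Finset.filter_singleton, if_pos h2,
      Finset.sum_insert (by rw [Finset.mem_singleton]; omega), Finset.sum_singleton]
    push_cast
    ring
  have hz := sum_wA_zero hP4 hP1
  have hu : ∑ q ∈ ((Finset.Icc 1 (p - 1)).biUnion fun j => (RZ j) ×ˢ (WZ (p - j))) ∪ C, wA q
      = 0 := by rw [hsplitEq]; exact hz
  rw [Finset.sum_union hdisj2, hC] at hu
  linarith
end

section
/- For every positive integer n, 4σ(n) - 4σ(n/2) + 8σ(n/4) - 32σ(n/8) > 0, where σ(q) = 0 when q is not a positive integer. -/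
lemma sigma1_eq (n : ℕ) : sigma1 n = ((∑ d ∈ n.divisors, d : ℕ) : ℤ) := by
  simp [sigma1]

lemma sigma1_pos {n : ℕ} (hn : 0 < n) : 0 < sigma1 n := by
  rw [sigma1_eq]
  have : 0 < ∑ d ∈ n.divisors, d := by
    apply Finset.sum_pos
    · intro d hd; exact Nat.pos_of_mem_divisors hd
    · exact ⟨1, Nat.one_mem_divisors.2 hn.ne'⟩
  exact_mod_cast this

lemma sigma1_two_pow_mul (k m : ℕ) (hm : Odd m) :
    sigma1 (2 ^ k * m) = (2 ^ (k + 1) - 1) * sigma1 m := by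
  have hcop : Nat.Coprime (2 ^ k) m := by
    apply Nat.Coprime.pow_left
    exact Nat.coprime_two_left.2 hm
  rw [sigma1_eq, sigma1_eq, hcop.sum_divisors_mul]
  have h2 : ∑ d ∈ (2 ^ k).divisors, d = 2 ^ (k + 1) - 1 := by
    rw [← ArithmeticFunction.sigma_one_apply,
      ArithmeticFunction.sigma_one_apply_prime_pow Nat.prime_two]
    simp [Nat.geomSum_eq (le_refl 2)]
  rw [h2]
  push_cast [Nat.one_le_two_pow]
  ring

theorem williams_positivity (n : ℕ) (hn : 0 < n) :
    0 < 4 * sigma1 n - 4 * sigmaDiv n 2 + 8 * sigmaDiv n 4 - 32 * sigmaDiv n 8 := by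
  obtain ⟨k, m, hm, rfl⟩ := Nat.exists_eq_two_pow_mul_odd hn.ne'
  have hm0 : 0 < m := hm.pos
  have hmod : m % 2 = 1 := Nat.odd_iff.mp hm
  have hS := sigma1_pos hm0
  match k with
  | 0 =>
    simp only [pow_zero, one_mul]
    rw [sigmaDiv, sigmaDiv, sigmaDiv, if_neg (by omega), if_neg (by omega),
      if_neg (by omega)]
    linarith
  | 1 =>
    simp only [show (2:ℕ)^1 = 2 from rfl]
    rw [sigmaDiv, sigmaDiv, sigmaDiv, if_pos (by omega), if_neg (by omega),
      if_neg (by omega), show 2 * m / 2 = m by omega,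
      show (2:ℕ) * m = 2 ^ 1 * m by ring, sigma1_two_pow_mul 1 m hm]
    norm_num
    linarith
  | 2 =>
    simp only [show (2:ℕ)^2 = 4 from rfl]
    rw [sigmaDiv, sigmaDiv, sigmaDiv, if_pos (by omega), if_pos (by omega),
      if_neg (by omega), show 4 * m / 2 = 2 * m by omega, show 4 * m / 4 = m by omega,
      show (4:ℕ) * m = 2 ^ 2 * m by ring, show (2:ℕ) * m = 2 ^ 1 * m by ring,
      sigma1_two_pow_mul 2 m hm, sigma1_two_pow_mul 1 m hm]
    norm_num
    linarith
  | (k + 3) =>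
    have h2 : (2:ℕ) ∣ 2 ^ (k + 3) * m := ⟨2 ^ (k + 2) * m, by ring⟩
    have h4 : (4:ℕ) ∣ 2 ^ (k + 3) * m := ⟨2 ^ (k + 1) * m, by ring⟩
    have h8 : (8:ℕ) ∣ 2 ^ (k + 3) * m := ⟨2 ^ k * m, by ring⟩
    have e2 : 2 ^ (k + 3) * m / 2 = 2 ^ (k + 2) * m := by
      rw [show 2 ^ (k + 3) * m = 2 * (2 ^ (k + 2) * m) by ring,
        Nat.mul_div_cancel_left _ (by norm_num : (0:ℕ) < 2)]
    have e4 : 2 ^ (k + 3) * m / 4 = 2 ^ (k + 1) * m := by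
      rw [show 2 ^ (k + 3) * m = 4 * (2 ^ (k + 1) * m) by ring,
        Nat.mul_div_cancel_left _ (by norm_num : (0:ℕ) < 4)]
    have e8 : 2 ^ (k + 3) * m / 8 = 2 ^ k * m := by
      rw [show 2 ^ (k + 3) * m = 8 * (2 ^ k * m) by ring,
        Nat.mul_div_cancel_left _ (by norm_num : (0:ℕ) < 8)]
    rw [sigmaDiv, sigmaDiv, sigmaDiv, if_pos h2, if_pos h4, if_pos h8, e2, e4, e8,
      sigma1_two_pow_mul (k+3) m hm, sigma1_two_pow_mul (k+2) m hm,
      sigma1_two_pow_mul (k+1) m hm, sigma1_two_pow_mul k m hm]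
    have : 4 * ((2 ^ (k + 3 + 1) - 1) * sigma1 m) - 4 * ((2 ^ (k + 2 + 1) - 1) * sigma1 m)
        + 8 * ((2 ^ (k + 1 + 1) - 1) * sigma1 m) - 32 * ((2 ^ (k + 1) - 1) * sigma1 m)
        = 24 * sigma1 m := by
      simp only [pow_add]
      ring
    rw [this]
    linarith
end

section
/- If ∏_{n=1}^∞ (1+x^n)^4 (1+x^{2n})^2 (1+x^{4n})^4 = ∑_{n≥0} α(n)x^n, then α(n) > 0 for all n ≥ 0. -/
open Polynomial Finset Filter Topology

noncomputable section SP

/-- the factor polynomial with exponent `k` (we use `k = n+1`). -/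
def sp_f (k : ℕ) : Polynomial ℕ :=
  (1 + X ^ k) ^ 4 * (1 + X ^ (2 * k)) ^ 2 * (1 + X ^ (4 * k)) ^ 4

/-- partial product polynomial -/
def sp_Q (N : ℕ) : Polynomial ℕ := ∏ n ∈ Finset.range N, sp_f (n + 1)

lemma sp_f_coeff_zero {k : ℕ} (hk : k ≠ 0) : (sp_f k).coeff 0 = 1 := by
  have h2 : 2 * k ≠ 0 := by omega
  have h4 : 4 * k ≠ 0 := by omega
  simp [sp_f, Polynomial.coeff_zero_eq_eval_zero, zero_pow hk, zero_pow h2, zero_pow h4]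

lemma sp_Q_coeff_zero (N : ℕ) : (sp_Q N).coeff 0 = 1 := by
  rw [sp_Q, Polynomial.coeff_zero_eq_eval_zero, Polynomial.eval_prod]
  apply Finset.prod_eq_one
  intro n _
  have := sp_f_coeff_zero (k := n + 1) (by omega)
  rwa [Polynomial.coeff_zero_eq_eval_zero] at this

/-- "low coefficients vanish" predicate -/
def sp_L (N : ℕ) (p : Polynomial ℕ) : Prop := ∀ j, j ≠ 0 → j ≤ N → p.coeff j = 0

lemma sp_L_mul {N : ℕ} {p q : Polynomial ℕ} (hp : sp_L N p) (hq : sp_L N q) :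
    sp_L N (p * q) := by
  intro j hj hjN
  rw [Polynomial.coeff_mul]
  apply Finset.sum_eq_zero
  rintro ⟨a, b⟩ hab
  rw [Finset.HasAntidiagonal.mem_antidiagonal] at hab
  rcases Nat.eq_zero_or_pos a with ha | ha
  · have hb : b = j := by omega
    rw [hq b (by omega) (by omega)]; ring
  · rw [hp a (by omega) (by omega)]; ring

lemma sp_L_one_add_X_pow {N m : ℕ} (hm : N < m) : sp_L N (1 + X ^ m) := by
  intro j hj hjN
  rw [Polynomial.coeff_add, Polynomial.coeff_one, Polynomial.coeff_X_pow]
  simp only [if_neg (by omega : ¬ j = 0), if_neg (by omega : ¬ j = m)]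
  rfl

lemma sp_L_pow {N : ℕ} {p : Polynomial ℕ} (hp : sp_L N p) (k : ℕ) : sp_L N (p ^ k) := by
  induction k with
  | zero => intro j hj hjN; simp [Polynomial.coeff_one, if_neg hj]
  | succ k ih => rw [pow_succ]; exact sp_L_mul ih hp

lemma sp_L_f {N k : ℕ} (hk : N < k) : sp_L N (sp_f k) := by
  refine sp_L_mul (sp_L_mul (sp_L_pow (sp_L_one_add_X_pow hk) 4) ?_) ?_
  · exact sp_L_pow (sp_L_one_add_X_pow (by omega)) 2
  · exact sp_L_pow (sp_L_one_add_X_pow (by omega)) 4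

/-- multiplying by a polynomial with vanishing low coefficients and constant term 1
keeps low coefficients -/
lemma sp_coeff_mul_L {m : ℕ} {p r : Polynomial ℕ} (hr : sp_L m r) (hr0 : r.coeff 0 = 1) :
    (p * r).coeff m = p.coeff m := by
  rw [Polynomial.coeff_mul]
  rw [Finset.sum_eq_single (m, 0)]
  · rw [hr0, mul_one]
  · rintro ⟨a, b⟩ hab hne
    rw [Finset.HasAntidiagonal.mem_antidiagonal] at hab
    have hb : b ≠ 0 := by rintro rfl; exact hne (by simp [← hab])
    rw [hr b hb (by omega)]; ring
  · intro h; exact absurd (Finset.HasAntidiagonal.mem_antidiagonal.2 (by simp)) h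

lemma sp_Q_stable {m N N' : ℕ} (hm : m ≤ N) (hN : N ≤ N') :
    (sp_Q N').coeff m = (sp_Q N).coeff m := by
  obtain ⟨k, rfl⟩ := Nat.exists_eq_add_of_le hN
  rw [sp_Q, Finset.prod_range_add, ← sp_Q]
  have key : ∀ k : ℕ, sp_L N (∏ i ∈ Finset.range k, sp_f (N + i + 1)) := by
    intro k
    induction k with
    | zero => intro j hj hjN; simp [Polynomial.coeff_one, if_neg hj]
    | succ k ih => rw [Finset.prod_range_succ]; exact sp_L_mul ih (sp_L_f (by omega))
  apply sp_coeff_mul_L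
  · intro j hj hjm; exact key k j hj (le_trans hjm hm)
  · rw [Polynomial.coeff_zero_eq_eval_zero, Polynomial.eval_prod]
    apply Finset.prod_eq_one
    intro i _
    have := sp_f_coeff_zero (k := N + i + 1) (by omega)
    rwa [Polynomial.coeff_zero_eq_eval_zero] at this

lemma sp_le_coeff_mul (p r : Polynomial ℕ) (m : ℕ) :
    p.coeff m * r.coeff 0 ≤ (p * r).coeff m := by
  rw [Polynomial.coeff_mul]
  exact Finset.single_le_sum (f := fun x : ℕ × ℕ => p.coeff x.1 * r.coeff x.2)
    (fun _ _ => Nat.zero_le _) (a := (m, 0)) (Finset.HasAntidiagonal.mem_antidiagonal.2 (add_zero m))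

lemma sp_Q_mono {m N N' : ℕ} (hN : N ≤ N') : (sp_Q N).coeff m ≤ (sp_Q N').coeff m := by
  obtain ⟨k, rfl⟩ := Nat.exists_eq_add_of_le hN
  conv_rhs => rw [sp_Q, Finset.prod_range_add]
  rw [← sp_Q]
  have h0 : (∏ i ∈ Finset.range k, sp_f (N + i + 1)).coeff 0 = 1 := by
    rw [Polynomial.coeff_zero_eq_eval_zero, Polynomial.eval_prod]
    apply Finset.prod_eq_one
    intro i _
    have := sp_f_coeff_zero (k := N + i + 1) (by omega)
    rwa [Polynomial.coeff_zero_eq_eval_zero] at this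
  calc (sp_Q N).coeff m = (sp_Q N).coeff m *
        (∏ i ∈ Finset.range k, sp_f (N + i + 1)).coeff 0 := by rw [h0, mul_one]
    _ ≤ _ := sp_le_coeff_mul _ _ _

/-- the coefficient sequence -/
def sp_b (m : ℕ) : ℕ := (sp_Q m).coeff m

lemma sp_b_eq {m N : ℕ} (h : m ≤ N) : (sp_Q N).coeff m = sp_b m := sp_Q_stable le_rfl h

lemma sp_coeff_le_b (N m : ℕ) : (sp_Q N).coeff m ≤ sp_b m := by
  rcases le_total N m with h | h
  · exact (sp_Q_mono h).trans_eq (sp_b_eq le_rfl)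
  · exact (sp_b_eq h).le

lemma sp_one_le_b (m : ℕ) : 1 ≤ sp_b m := by
  rcases Nat.eq_zero_or_pos m with rfl | hm
  · simp [sp_b, sp_Q_coeff_zero]
  · have hfac : sp_Q m = (1 + X ^ m) * ((1 + X ^ m) ^ 3 * (1 + X ^ (2 * m)) ^ 2 *
        (1 + X ^ (4 * m)) ^ 4 * sp_Q (m - 1)) := by
      conv_lhs => rw [show m = (m - 1) + 1 by omega]
      rw [sp_Q, Finset.prod_range_succ, ← sp_Q, sp_f, show m - 1 + 1 = m by omega]
      ring
    have h0 : ((1 + X ^ m) ^ 3 * (1 + X ^ (2 * m)) ^ 2 * (1 + X ^ (4 * m)) ^ 4 *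
        sp_Q (m - 1)).coeff 0 = 1 := by
      have hm0 : m ≠ 0 := by omega
      have h2 : 2 * m ≠ 0 := by omega
      have h4 : 4 * m ≠ 0 := by omega
      have := sp_Q_coeff_zero (m - 1)
      rw [Polynomial.coeff_zero_eq_eval_zero] at this ⊢
      simp [zero_pow hm0, zero_pow h2, zero_pow h4, this]
    have hXm : (1 + X ^ m : Polynomial ℕ).coeff m = 1 := by
      rw [Polynomial.coeff_add, Polynomial.coeff_one, Polynomial.coeff_X_pow]
      simp [if_neg (by omega : ¬ m = 0)]
    calc 1 = (1 + X ^ m : Polynomial ℕ).coeff m * ((1 + X ^ m) ^ 3 * (1 + X ^ (2 * m)) ^ 2 *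
          (1 + X ^ (4 * m)) ^ 4 * sp_Q (m - 1)).coeff 0 := by rw [hXm, h0]
      _ ≤ (sp_Q m).coeff m := by rw [hfac]; exact sp_le_coeff_mul _ _ _

/-! ### Evaluation -/

lemma sp_eval_map {R : Type*} [CommSemiring R] (N : ℕ) (x : R) :
    ((sp_Q N).map (Nat.castRingHom R)).eval x =
      ∏ n ∈ Finset.range N,
        ((1 + x ^ (n + 1)) ^ 4 * (1 + x ^ (2 * (n + 1))) ^ 2 * (1 + x ^ (4 * (n + 1))) ^ 4) := by
  simp [sp_Q, sp_f, Polynomial.eval_prod, Polynomial.map_prod]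

lemma sp_eval_sum {R : Type*} [CommSemiring R] [CharZero R] (N : ℕ) (x : R) :
    ((sp_Q N).map (Nat.castRingHom R)).eval x =
      ∑ m ∈ Finset.range ((sp_Q N).natDegree + 1), ((sp_Q N).coeff m : R) * x ^ m := by
  rw [Polynomial.eval_eq_sum_range]
  refine Finset.sum_congr ?_ fun m _ => by rw [Polynomial.coeff_map]; rfl
  rw [Polynomial.natDegree_map_eq_of_injective Nat.cast_injective]

/-! ### Real bounds on the coefficients -/

lemma sp_eval_le_exp (m : ℕ) {t : ℝ} (h0 : 0 ≤ t) (h1 : t < 1) :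
    ((sp_Q m).map (Nat.castRingHom ℝ)).eval t ≤ Real.exp (10 * t / (1 - t)) := by
  rw [sp_eval_map]
  have key : ∀ n ∈ Finset.range m,
      (1 + t ^ (n + 1)) ^ 4 * (1 + t ^ (2 * (n + 1))) ^ 2 * (1 + t ^ (4 * (n + 1))) ^ 4 ≤
        Real.exp (10 * t ^ (n + 1)) := by
    intro n _
    set k := n + 1
    have htk0 : 0 ≤ t ^ k := pow_nonneg h0 k
    have htk1 : t ^ k ≤ 1 := pow_le_one₀ h0 h1.le
    have h2 : t ^ (2 * k) ≤ t ^ k := pow_le_pow_of_le_one h0 h1.le (by omega)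
    have h4 : t ^ (4 * k) ≤ t ^ k := pow_le_pow_of_le_one h0 h1.le (by omega)
    have h2' : (0:ℝ) ≤ 1 + t ^ (2 * k) := by positivity
    have h4' : (0:ℝ) ≤ 1 + t ^ (4 * k) := by positivity
    have hb : (1 + t ^ (2 * k)) ≤ 1 + t ^ k := by linarith
    have hc : (1 + t ^ (4 * k)) ≤ 1 + t ^ k := by linarith
    have step : (1 + t ^ k) ^ 4 * (1 + t ^ (2 * k)) ^ 2 * (1 + t ^ (4 * k)) ^ 4 ≤
        (1 + t ^ k) ^ 10 := by
      have e1 : (1 + t ^ (2 * k)) ^ 2 ≤ (1 + t ^ k) ^ 2 := pow_le_pow_left₀ h2' hb 2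
      have e2 : (1 + t ^ (4 * k)) ^ 4 ≤ (1 + t ^ k) ^ 4 := pow_le_pow_left₀ h4' hc 4
      calc (1 + t ^ k) ^ 4 * (1 + t ^ (2 * k)) ^ 2 * (1 + t ^ (4 * k)) ^ 4
          ≤ (1 + t ^ k) ^ 4 * (1 + t ^ k) ^ 2 * (1 + t ^ k) ^ 4 := by
            apply mul_le_mul (mul_le_mul le_rfl e1 (by positivity) (by positivity))
              e2 (by positivity) (by positivity)
        _ = (1 + t ^ k) ^ 10 := by ring
    refine step.trans ?_
    have := Real.add_one_le_exp (t ^ k)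
    calc (1 + t ^ k) ^ 10 ≤ Real.exp (t ^ k) ^ 10 := by
          apply pow_le_pow_left₀ (by positivity) (by linarith)
      _ = Real.exp (10 * t ^ k) := by
          rw [← Real.exp_nat_mul]; norm_num [mul_comm]
  calc (∏ n ∈ Finset.range m, ((1 + t ^ (n + 1)) ^ 4 * (1 + t ^ (2 * (n + 1))) ^ 2 *
        (1 + t ^ (4 * (n + 1))) ^ 4))
      ≤ ∏ n ∈ Finset.range m, Real.exp (10 * t ^ (n + 1)) := by
        apply Finset.prod_le_prod (fun n _ => by positivity) key
    _ = Real.exp (∑ n ∈ Finset.range m, 10 * t ^ (n + 1)) := by rw [Real.exp_sum]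
    _ ≤ Real.exp (10 * t / (1 - t)) := by
        apply Real.exp_le_exp.2
        have hsum : ∑ n ∈ Finset.range m, t ^ n ≤ (1 - t)⁻¹ := by
          rw [← tsum_geometric_of_lt_one h0 h1]
          exact Summable.sum_le_tsum _ (fun n _ => pow_nonneg h0 n) (summable_geometric_of_lt_one h0 h1)
        have : ∑ n ∈ Finset.range m, 10 * t ^ (n + 1) =
            10 * t * ∑ n ∈ Finset.range m, t ^ n := by
          rw [Finset.mul_sum]
          exact Finset.sum_congr rfl fun n _ => by ring
        rw [this, div_eq_mul_inv]
        have h1t : 0 < 1 - t := by linarith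
        calc 10 * t * ∑ n ∈ Finset.range m, t ^ n ≤ 10 * t * (1 - t)⁻¹ := by
              apply mul_le_mul_of_nonneg_left hsum (by positivity)
          _ = 10 * t * (1 - t)⁻¹ := rfl

lemma sp_b_mul_le (m : ℕ) {t : ℝ} (h0 : 0 ≤ t) (h1 : t < 1) :
    (sp_b m : ℝ) * t ^ m ≤ Real.exp (10 * t / (1 - t)) := by
  refine le_trans ?_ (sp_eval_le_exp m h0 h1)
  rw [sp_eval_sum]
  have hmem : m ∈ Finset.range ((sp_Q m).natDegree + 1) := by
    rw [Finset.mem_range, Nat.lt_succ_iff]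
    apply Polynomial.le_natDegree_of_ne_zero
    have := sp_one_le_b m
    simp only [sp_b] at this
    omega
  exact Finset.single_le_sum (f := fun i => ((sp_Q m).coeff i : ℝ) * t ^ i)
    (fun i _ => by positivity) hmem

/-! ### Summability -/

lemma sp_summable_real {z : ℝ} (h0 : 0 ≤ z) (h1 : z < 1) :
    Summable (fun m => (sp_b m : ℝ) * z ^ m) := by
  set t : ℝ := (z + 1) / 2 with ht
  have ht0 : 0 < t := by rw [ht]; linarith
  have ht1 : t < 1 := by rw [ht]; linarith
  have hzt : z < t := by rw [ht]; linarith
  set M : ℝ := Real.exp (10 * t / (1 - t)) with hM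
  have hρ0 : 0 ≤ z / t := by positivity
  have hρ1 : z / t < 1 := (div_lt_one ht0).2 hzt
  refine Summable.of_nonneg_of_le (fun m => by positivity) (fun m => ?_)
    ((summable_geometric_of_lt_one hρ0 hρ1).mul_left M)
  have htz : t * (z / t) = z := by field_simp
  have hz : z ^ m = t ^ m * (z / t) ^ m := by rw [← mul_pow, htz]
  calc (sp_b m : ℝ) * z ^ m = ((sp_b m : ℝ) * t ^ m) * (z / t) ^ m := by rw [hz]; ring
    _ ≤ M * (z / t) ^ m :=
        mul_le_mul_of_nonneg_right (sp_b_mul_le m ht0.le ht1) (by positivity)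

lemma sp_summable_complex {x : ℂ} (hx : ‖x‖ < 1) :
    Summable (fun m => (sp_b m : ℂ) * x ^ m) := by
  apply Summable.of_norm
  have : ∀ m, ‖(sp_b m : ℂ) * x ^ m‖ = (sp_b m : ℝ) * ‖x‖ ^ m := by
    intro m
    rw [norm_mul, norm_pow, Complex.norm_natCast]
  simpa only [this] using sp_summable_real (norm_nonneg x) hx

/-! ### The limit of partial products -/

set_option maxHeartbeats 1000000 in
lemma sp_tendsto {x : ℂ} (hx : ‖x‖ < 1) :
    Filter.Tendsto (fun N => ∏ n ∈ Finset.range N,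
        ((1 + x ^ (n + 1)) ^ 4 * (1 + x ^ (2 * (n + 1))) ^ 2 * (1 + x ^ (4 * (n + 1))) ^ 4))
      Filter.atTop (𝓝 (∑' m, (sp_b m : ℂ) * x ^ m)) := by
  set z : ℝ := ‖x‖ with hzdef
  have h0 : 0 ≤ z := norm_nonneg x
  set t : ℝ := (z + 1) / 2 with ht
  have ht0 : 0 < t := by rw [ht]; linarith
  have ht1 : t < 1 := by rw [ht]; linarith
  have hzt : z < t := by rw [ht]; linarith
  set M : ℝ := Real.exp (10 * t / (1 - t)) with hM
  have hM0 : 0 < M := Real.exp_pos _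
  set ρ : ℝ := z / t with hρ
  have hρ0 : 0 ≤ ρ := by positivity
  have hρ1 : ρ < 1 := (div_lt_one ht0).2 hzt
  have hgeom : ∀ m : ℕ, (sp_b m : ℝ) * z ^ m ≤ M * ρ ^ m := by
    intro m
    have htz : t * ρ = z := by rw [hρ]; field_simp
    have hz : z ^ m = t ^ m * ρ ^ m := by rw [← mul_pow, htz]
    calc (sp_b m : ℝ) * z ^ m = ((sp_b m : ℝ) * t ^ m) * ρ ^ m := by rw [hz]; ring
      _ ≤ M * ρ ^ m :=
          mul_le_mul_of_nonneg_right (sp_b_mul_le m ht0.le ht1) (by positivity)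
  set L : ℂ := ∑' m, (sp_b m : ℂ) * x ^ m with hL
  have hbsum : Summable (fun m => (sp_b m : ℂ) * x ^ m) := sp_summable_complex hx
  rw [tendsto_iff_norm_sub_tendsto_zero]
  apply squeeze_zero (g := fun N => (M * (1 - ρ)⁻¹) * ρ ^ (N + 1)) (fun N => norm_nonneg _)
  · intro N
    -- rewrite the partial product as a tsum
    have hev : ∏ n ∈ Finset.range N,
        ((1 + x ^ (n + 1)) ^ 4 * (1 + x ^ (2 * (n + 1))) ^ 2 * (1 + x ^ (4 * (n + 1))) ^ 4) =
        ∑' m, ((sp_Q N).coeff m : ℂ) * x ^ m := by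
      rw [← sp_eval_map, sp_eval_sum]
      rw [tsum_eq_sum (s := Finset.range ((sp_Q N).natDegree + 1))]
      intro m hm
      rw [Finset.mem_range, Nat.lt_succ_iff, not_le] at hm
      rw [Polynomial.coeff_eq_zero_of_natDegree_lt hm]
      simp
    have hcsum : Summable (fun m => ((sp_Q N).coeff m : ℂ) * x ^ m) := by
      apply summable_of_ne_finset_zero (s := Finset.range ((sp_Q N).natDegree + 1))
      intro m hm
      rw [Finset.mem_range, Nat.lt_succ_iff, not_le] at hm
      rw [Polynomial.coeff_eq_zero_of_natDegree_lt hm]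
      simp
    -- the real nonneg differences
    set D : ℕ → ℝ := fun m => (sp_b m : ℝ) - ((sp_Q N).coeff m : ℝ) with hD
    have hD0 : ∀ m, 0 ≤ D m := fun m => by
      simp only [hD, sub_nonneg, Nat.cast_le]; exact sp_coeff_le_b N m
    have hDle : ∀ m, D m * z ^ m ≤ M * ρ ^ m := by
      intro m
      refine le_trans ?_ (hgeom m)
      apply mul_le_mul_of_nonneg_right _ (by positivity)
      simp only [hD]
      have : (0:ℝ) ≤ ((sp_Q N).coeff m : ℝ) := by positivity
      linarith
    have hDzero : ∀ m < N + 1, D m * z ^ m = 0 := by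
      intro m hm
      simp only [hD, sp_b_eq (by omega : m ≤ N)]
      simp
    have hnorm : ∀ m, ‖(sp_b m : ℂ) * x ^ m - ((sp_Q N).coeff m : ℂ) * x ^ m‖
        = D m * z ^ m := by
      intro m
      rw [← sub_mul, norm_mul, norm_pow, ← hzdef]
      congr 1
      have : (sp_b m : ℂ) - ((sp_Q N).coeff m : ℂ) = ((D m : ℝ) : ℂ) := by
        simp only [hD]; push_cast; ring
      rw [this, Complex.norm_real, Real.norm_of_nonneg (hD0 m)]
    have hDsum : Summable (fun m => D m * z ^ m) :=
      Summable.of_nonneg_of_le (fun m => mul_nonneg (hD0 m) (by positivity)) hDle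
        ((summable_geometric_of_lt_one hρ0 hρ1).mul_left M)
    calc ‖(∏ n ∈ Finset.range N, ((1 + x ^ (n + 1)) ^ 4 * (1 + x ^ (2 * (n + 1))) ^ 2 *
            (1 + x ^ (4 * (n + 1))) ^ 4)) - L‖
        = ‖L - ∑' m, ((sp_Q N).coeff m : ℂ) * x ^ m‖ := by rw [hev, norm_sub_rev]
      _ = ‖∑' m, ((sp_b m : ℂ) * x ^ m - ((sp_Q N).coeff m : ℂ) * x ^ m)‖ := by
          rw [hL, ← Summable.tsum_sub hbsum hcsum]
      _ ≤ ∑' m, ‖(sp_b m : ℂ) * x ^ m - ((sp_Q N).coeff m : ℂ) * x ^ m‖ :=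
          norm_tsum_le_tsum_norm (by simpa only [hnorm] using hDsum)
      _ = ∑' m, D m * z ^ m := by simp only [hnorm]
      _ = ∑' m, D (m + (N + 1)) * z ^ (m + (N + 1)) := by
          rw [← Summable.sum_add_tsum_nat_add (N + 1) hDsum]
          rw [Finset.sum_eq_zero (fun m hm => hDzero m (Finset.mem_range.1 hm)), zero_add]
      _ ≤ ∑' m, M * ρ ^ (m + (N + 1)) := by
          refine Summable.tsum_le_tsum (fun m => hDle (m + (N + 1)))
            ((summable_nat_add_iff (f := fun m => D m * z ^ m) (N + 1)).2 hDsum) ?_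
          exact ((summable_nat_add_iff (f := fun m => M * ρ ^ m) (N + 1)).2
            ((summable_geometric_of_lt_one hρ0 hρ1).mul_left M))
      _ = (M * (1 - ρ)⁻¹) * ρ ^ (N + 1) := by
          have : ∀ m : ℕ, M * ρ ^ (m + (N + 1)) = (M * ρ ^ (N + 1)) * ρ ^ m := by
            intro m; rw [pow_add]; ring
          simp only [this]
          rw [tsum_mul_left, tsum_geometric_of_lt_one hρ0 hρ1]
          ring
  · have : Filter.Tendsto (fun N : ℕ => ρ ^ (N + 1)) Filter.atTop (𝓝 0) := by
      have h := tendsto_pow_atTop_nhds_zero_of_lt_one hρ0 hρ1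
      exact h.comp (Filter.tendsto_add_atTop_nat 1)
    simpa using this.const_mul (M * (1 - ρ)⁻¹)

/-! ### Multipliability -/

lemma sp_factor_sub_one {y : ℂ} (hy : ‖y‖ ≤ 1) :
    ‖(1 + y) ^ 4 * (1 + y ^ 2) ^ 2 * (1 + y ^ 4) ^ 4 - 1‖ ≤ 1023 * ‖y‖ := by
  have h0 : 0 ≤ ‖y‖ := norm_nonneg y
  have h1 : ‖1 + y‖ ≤ 2 := by
    calc ‖1 + y‖ ≤ ‖(1:ℂ)‖ + ‖y‖ := norm_add_le _ _
      _ ≤ 2 := by rw [norm_one]; linarith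
  have hy2 : ‖y ^ 2‖ ≤ ‖y‖ := by
    rw [norm_pow]
    calc ‖y‖ ^ 2 = ‖y‖ ^ 1 * ‖y‖ := by ring
      _ ≤ 1 * ‖y‖ := mul_le_mul_of_nonneg_right (pow_le_one₀ h0 hy) h0
      _ = ‖y‖ := one_mul _
  have hy4 : ‖y ^ 4‖ ≤ ‖y‖ := by
    rw [norm_pow]
    calc ‖y‖ ^ 4 = ‖y‖ ^ 3 * ‖y‖ := by ring
      _ ≤ 1 * ‖y‖ := mul_le_mul_of_nonneg_right (pow_le_one₀ h0 hy) h0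
      _ = ‖y‖ := one_mul _
  have h2 : ‖1 + y ^ 2‖ ≤ 2 := by
    calc ‖1 + y ^ 2‖ ≤ ‖(1:ℂ)‖ + ‖y ^ 2‖ := norm_add_le _ _
      _ ≤ 2 := by rw [norm_one]; linarith
  have h4 : ‖1 + y ^ 4‖ ≤ 2 := by
    calc ‖1 + y ^ 4‖ ≤ ‖(1:ℂ)‖ + ‖y ^ 4‖ := norm_add_le _ _
      _ ≤ 2 := by rw [norm_one]; linarith
  have cube_aux : ∀ c : ℂ, ‖c‖ ≤ 2 → ‖c ^ 3 + c ^ 2 + c + 1‖ ≤ 15 := by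
    intro c hc
    have hc0 : 0 ≤ ‖c‖ := norm_nonneg c
    calc ‖c ^ 3 + c ^ 2 + c + 1‖ ≤ ‖c ^ 3 + c ^ 2 + c‖ + ‖(1:ℂ)‖ := norm_add_le _ _
      _ ≤ (‖c ^ 3 + c ^ 2‖ + ‖c‖) + ‖(1:ℂ)‖ := by
          have := norm_add_le (c ^ 3 + c ^ 2) c; linarith
      _ ≤ ((‖c ^ 3‖ + ‖c ^ 2‖) + ‖c‖) + ‖(1:ℂ)‖ := by
          have := norm_add_le (c ^ 3) (c ^ 2); linarith
      _ ≤ 15 := by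
          rw [norm_one, norm_pow, norm_pow]
          nlinarith
  have hA : ‖(1 + y) ^ 4‖ ≤ 16 := by
    rw [norm_pow]
    calc ‖1 + y‖ ^ 4 ≤ 2 ^ 4 := pow_le_pow_left₀ (norm_nonneg _) h1 4
      _ = 16 := by norm_num
  have hB : ‖(1 + y ^ 2) ^ 2‖ ≤ 4 := by
    rw [norm_pow]
    calc ‖1 + y ^ 2‖ ^ 2 ≤ 2 ^ 2 := pow_le_pow_left₀ (norm_nonneg _) h2 2
      _ = 4 := by norm_num
  have hA1 : ‖(1 + y) ^ 4 - 1‖ ≤ 15 * ‖y‖ := by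
    have hr : (1 + y) ^ 4 - 1 = y * ((1 + y) ^ 3 + (1 + y) ^ 2 + (1 + y) + 1) := by ring
    rw [hr, norm_mul, mul_comm]
    exact mul_le_mul_of_nonneg_right (cube_aux _ h1) h0
  have hB1 : ‖(1 + y ^ 2) ^ 2 - 1‖ ≤ 3 * ‖y‖ := by
    have hr : (1 + y ^ 2) ^ 2 - 1 = y ^ 2 * (y ^ 2 + 2) := by ring
    rw [hr, norm_mul]
    have : ‖y ^ 2 + 2‖ ≤ 3 := by
      calc ‖y ^ 2 + 2‖ ≤ ‖y ^ 2‖ + ‖(2:ℂ)‖ := norm_add_le _ _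
        _ ≤ 3 := by
            have : ‖(2:ℂ)‖ = 2 := by norm_num
            rw [this]; linarith
    calc ‖y ^ 2‖ * ‖y ^ 2 + 2‖ ≤ ‖y‖ * 3 := by
          apply mul_le_mul hy2 this (norm_nonneg _) h0
      _ = 3 * ‖y‖ := by ring
  have hC1 : ‖(1 + y ^ 4) ^ 4 - 1‖ ≤ 15 * ‖y‖ := by
    have hr : (1 + y ^ 4) ^ 4 - 1 =
        y ^ 4 * ((1 + y ^ 4) ^ 3 + (1 + y ^ 4) ^ 2 + (1 + y ^ 4) + 1) := by ring
    rw [hr, norm_mul]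
    calc ‖y ^ 4‖ * ‖(1 + y ^ 4) ^ 3 + (1 + y ^ 4) ^ 2 + (1 + y ^ 4) + 1‖ ≤ ‖y‖ * 15 := by
          apply mul_le_mul hy4 (cube_aux _ h4) (norm_nonneg _) h0
      _ = 15 * ‖y‖ := by ring
  have hsplit : (1 + y) ^ 4 * (1 + y ^ 2) ^ 2 * (1 + y ^ 4) ^ 4 - 1 =
      (1 + y) ^ 4 * (1 + y ^ 2) ^ 2 * ((1 + y ^ 4) ^ 4 - 1) +
      (1 + y) ^ 4 * ((1 + y ^ 2) ^ 2 - 1) + ((1 + y) ^ 4 - 1) := by ring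
  rw [hsplit]
  calc ‖(1 + y) ^ 4 * (1 + y ^ 2) ^ 2 * ((1 + y ^ 4) ^ 4 - 1) +
        (1 + y) ^ 4 * ((1 + y ^ 2) ^ 2 - 1) + ((1 + y) ^ 4 - 1)‖
      ≤ ‖(1 + y) ^ 4 * (1 + y ^ 2) ^ 2 * ((1 + y ^ 4) ^ 4 - 1) +
          (1 + y) ^ 4 * ((1 + y ^ 2) ^ 2 - 1)‖ + ‖(1 + y) ^ 4 - 1‖ := norm_add_le _ _
    _ ≤ (‖(1 + y) ^ 4 * (1 + y ^ 2) ^ 2 * ((1 + y ^ 4) ^ 4 - 1)‖ +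
          ‖(1 + y) ^ 4 * ((1 + y ^ 2) ^ 2 - 1)‖) + ‖(1 + y) ^ 4 - 1‖ := by
        have := norm_add_le ((1 + y) ^ 4 * (1 + y ^ 2) ^ 2 * ((1 + y ^ 4) ^ 4 - 1))
          ((1 + y) ^ 4 * ((1 + y ^ 2) ^ 2 - 1))
        linarith
    _ ≤ 1023 * ‖y‖ := by
        rw [norm_mul, norm_mul, norm_mul]
        have e1 : ‖(1 + y) ^ 4‖ * ‖(1 + y ^ 2) ^ 2‖ * ‖(1 + y ^ 4) ^ 4 - 1‖ ≤
            16 * 4 * (15 * ‖y‖) := by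
          apply mul_le_mul (mul_le_mul hA hB (norm_nonneg _) (by linarith)) hC1
            (norm_nonneg _) (by positivity)
        have e2 : ‖(1 + y) ^ 4‖ * ‖(1 + y ^ 2) ^ 2 - 1‖ ≤ 16 * (3 * ‖y‖) := by
          apply mul_le_mul hA hB1 (norm_nonneg _) (by norm_num)
        linarith

lemma sp_factor_ne_zero {x : ℂ} (hx : ‖x‖ < 1) (k : ℕ) (hk : k ≠ 0) :
    (1 + x ^ k : ℂ) ≠ 0 := by
  intro h
  have hxk : x ^ k = -1 := by linear_combination h
  have : ‖x ^ k‖ < 1 := by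
    rw [norm_pow]
    calc ‖x‖ ^ k ≤ ‖x‖ ^ 1 :=
        pow_le_pow_of_le_one (norm_nonneg x) hx.le (by omega)
      _ < 1 := by rwa [pow_one]
  rw [hxk] at this
  simp at this

lemma sp_a_ne_zero {x : ℂ} (hx : ‖x‖ < 1) (n : ℕ) :
    ((1 + x ^ (n + 1)) ^ 4 * (1 + x ^ (2 * (n + 1))) ^ 2 * (1 + x ^ (4 * (n + 1))) ^ 4 : ℂ) ≠ 0 := by
  apply mul_ne_zero (mul_ne_zero (pow_ne_zero _ ?_) (pow_ne_zero _ ?_)) (pow_ne_zero _ ?_)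
  · exact sp_factor_ne_zero hx _ (by omega)
  · exact sp_factor_ne_zero hx _ (by omega)
  · exact sp_factor_ne_zero hx _ (by omega)

lemma sp_multipliable {x : ℂ} (hx : ‖x‖ < 1) :
    Multipliable (fun n : ℕ =>
      (1 + x ^ (n + 1)) ^ 4 * (1 + x ^ (2 * (n + 1))) ^ 2 * (1 + x ^ (4 * (n + 1))) ^ 4) := by
  set a : ℕ → ℂ := fun n =>
      (1 + x ^ (n + 1)) ^ 4 * (1 + x ^ (2 * (n + 1))) ^ 2 * (1 + x ^ (4 * (n + 1))) ^ 4 with ha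
  have hbound : ∀ n : ℕ, ‖a n - 1‖ ≤ 1023 * ‖x‖ ^ (n + 1) := by
    intro n
    have hy : ‖x ^ (n + 1)‖ ≤ 1 := by
      rw [norm_pow]; exact pow_le_one₀ (norm_nonneg x) hx.le
    have := sp_factor_sub_one hy
    simp only [ha]
    rw [← pow_mul, ← pow_mul] at this
    rw [show (n + 1) * 2 = 2 * (n + 1) by ring, show (n + 1) * 4 = 4 * (n + 1) by ring] at this
    rwa [norm_pow] at this
  -- summability of the logs
  have hlog : Summable (fun n => Complex.log (a n)) := by
    -- find a shift where the bound is ≤ 1/2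
    obtain ⟨k, hk⟩ : ∃ k : ℕ, 1023 * ‖x‖ ^ (k + 1) ≤ 1 / 2 := by
      obtain ⟨n, hn⟩ := exists_pow_lt_of_lt_one (show (0:ℝ) < 1/2046 by norm_num) hx
      refine ⟨n, ?_⟩
      have h1 : ‖x‖ ^ (n + 1) ≤ ‖x‖ ^ n :=
        pow_le_pow_of_le_one (norm_nonneg x) hx.le (by omega)
      nlinarith
    rw [← summable_nat_add_iff k]
    apply Summable.of_norm
    have hgeo : Summable (fun n : ℕ => (3/2 : ℝ) * (1023 * ‖x‖ ^ (n + k + 1))) := by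
      apply Summable.mul_left
      apply Summable.mul_left
      have : Summable (fun n : ℕ => ‖x‖ ^ n) :=
        summable_geometric_of_lt_one (norm_nonneg x) hx
      exact ((summable_nat_add_iff (f := fun n => ‖x‖ ^ n) (k + 1)).2 this).congr
        (fun n => by rw [add_assoc])
    apply Summable.of_nonneg_of_le (fun n => norm_nonneg _) _ hgeo
    intro n
    have hb := hbound (n + k)
    have hsmall : ‖a (n + k) - 1‖ ≤ 1 / 2 := by
      refine hb.trans (le_trans ?_ hk)
      have : ‖x‖ ^ (n + k + 1) ≤ ‖x‖ ^ (k + 1) :=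
        pow_le_pow_of_le_one (norm_nonneg x) hx.le (by omega)
      nlinarith [norm_nonneg x]
    have : Complex.log (a (n + k)) = Complex.log (1 + (a (n + k) - 1)) := by ring_nf
    rw [this]
    calc ‖Complex.log (1 + (a (n + k) - 1))‖ ≤ 3/2 * ‖a (n + k) - 1‖ :=
        Complex.norm_log_one_add_half_le_self hsmall
      _ ≤ 3/2 * (1023 * ‖x‖ ^ (n + k + 1)) := by
          have := hbound (n + k); nlinarith
  exact Complex.multipliable_of_summable_log hlog

/-! ### The product equals the series with coefficients `sp_b` -/

lemma sp_core {x : ℂ} (hx : ‖x‖ < 1) :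
    (∏' n : ℕ,
        (1 + x ^ (n + 1)) ^ 4 * (1 + x ^ (2 * (n + 1))) ^ 2 * (1 + x ^ (4 * (n + 1))) ^ 4) =
      ∑' m, (sp_b m : ℂ) * x ^ m := by
  have hm := sp_multipliable hx
  have h1 := hm.hasProd.tendsto_prod_nat
  exact tendsto_nhds_unique h1 (sp_tendsto hx)

lemma sp_b_tsum_ne_zero {t : ℝ} (h0 : 0 < t) (h1 : t < 1) :
    (∑' k, (sp_b k : ℂ) * (t : ℂ) ^ k) ≠ 0 := by
  have hsr : Summable (fun k => (sp_b k : ℝ) * t ^ k) := sp_summable_real h0.le h1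
  have hcast : (∑' k, (sp_b k : ℂ) * (t : ℂ) ^ k)
      = ((∑' k, (sp_b k : ℝ) * t ^ k : ℝ) : ℂ) := by
    rw [Complex.ofReal_tsum]
    congr 1
    funext k
    push_cast
    ring
  rw [hcast]
  have hge : 1 ≤ ∑' k, (sp_b k : ℝ) * t ^ k := by
    have h00 : (sp_b 0 : ℝ) * t ^ 0 = 1 := by simp [sp_b, sp_Q_coeff_zero]
    calc (1:ℝ) = (sp_b 0 : ℝ) * t ^ 0 := h00.symm
      _ ≤ ∑' k, (sp_b k : ℝ) * t ^ k :=
          Summable.le_tsum hsr 0 (fun j _ => by positivity)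
  simp only [ne_eq, Complex.ofReal_eq_zero]
  intro h
  linarith

lemma sp_norm_coe {t : ℝ} (h0 : 0 < t) (h1 : t < 1) : ‖(t : ℂ)‖ < 1 := by
  rw [Complex.norm_real, Real.norm_of_nonneg h0.le]
  exact h1

end SP

theorem series_positivity (α : ℕ → ℝ)
    (hα : ∀ x : ℂ, ‖x‖ < 1 →
      (∏' n : ℕ,
          (1 + x ^ (n + 1)) ^ 4 * (1 + x ^ (2 * (n + 1))) ^ 2 * (1 + x ^ (4 * (n + 1))) ^ 4) =
        ∑' n : ℕ, (α n : ℂ) * x ^ n) :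
    ∀ n : ℕ, 0 < α n := by
  -- at every real point `t ∈ (0,1)` the two series agree
  have heq : ∀ t : ℝ, 0 < t → t < 1 →
      (∑' k, (α k : ℂ) * (t : ℂ) ^ k) = ∑' k, (sp_b k : ℂ) * (t : ℂ) ^ k := by
    intro t h0 h1
    rw [← hα (t : ℂ) (sp_norm_coe h0 h1), sp_core (sp_norm_coe h0 h1)]
  -- the α-series is summable at every real point `t ∈ (0,1)`
  have hαsum : ∀ t : ℝ, 0 < t → t < 1 → Summable (fun k => (α k : ℂ) * (t : ℂ) ^ k) := by
    intro t h0 h1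
    by_contra h
    have e := heq t h0 h1
    rw [tsum_eq_zero_of_not_summable h] at e
    exact sp_b_tsum_ne_zero h0 h1 e.symm
  set γ : ℕ → ℂ := fun k => (α k : ℂ) - (sp_b k : ℂ) with hγ
  -- the difference series sums to zero at every real point
  have hγsum : ∀ t : ℝ, 0 < t → t < 1 → Summable (fun k => γ k * (t : ℂ) ^ k) := by
    intro t h0 h1
    have := (hαsum t h0 h1).sub
      ((sp_summable_complex (sp_norm_coe h0 h1)))
    apply this.congr
    intro k
    simp only [hγ]
    ring
  have hγzero : ∀ t : ℝ, 0 < t → t < 1 → (∑' k, γ k * (t : ℂ) ^ k) = 0 := by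
    intro t h0 h1
    have := Summable.tsum_sub (hαsum t h0 h1) (sp_summable_complex (sp_norm_coe h0 h1))
    have h2 : (∑' k, ((α k : ℂ) * (t : ℂ) ^ k - (sp_b k : ℂ) * (t : ℂ) ^ k))
        = ∑' k, γ k * (t : ℂ) ^ k := by
      congr 1; funext k; simp only [hγ]; ring
    rw [h2] at this
    rw [this, heq t h0 h1, sub_self]
  -- a uniform bound on the coefficients
  have hγC : ∃ C : ℝ, 0 ≤ C ∧ ∀ k, ‖γ k‖ ≤ C * 2 ^ k := by
    have hs : Summable (fun k => γ k * ((1/2 : ℝ) : ℂ) ^ k) := by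
      have := hγsum (1/2) (by norm_num) (by norm_num)
      apply this.congr; intro k; norm_num
    have hsn : Summable (fun k => ‖γ k * ((1/2 : ℝ) : ℂ) ^ k‖) := summable_norm_iff.2 hs
    refine ⟨∑' k, ‖γ k * ((1/2 : ℝ) : ℂ) ^ k‖, tsum_nonneg (fun k => norm_nonneg _), ?_⟩
    intro k
    have hle : ‖γ k * ((1/2 : ℝ) : ℂ) ^ k‖ ≤ ∑' j, ‖γ j * ((1/2 : ℝ) : ℂ) ^ j‖ :=
      Summable.le_tsum hsn k (fun j _ => norm_nonneg _)
    have hval : ‖γ k * ((1/2 : ℝ) : ℂ) ^ k‖ = ‖γ k‖ * (1/2 : ℝ) ^ k := by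
      rw [norm_mul, norm_pow, Complex.norm_real, Real.norm_of_nonneg (by norm_num)]
    rw [hval] at hle
    have h2k : (0:ℝ) < (1/2) ^ k := by positivity
    calc ‖γ k‖ = (‖γ k‖ * (1/2 : ℝ) ^ k) * 2 ^ k := by
          rw [mul_assoc, ← mul_pow]
          norm_num
      _ ≤ (∑' j, ‖γ j * ((1/2 : ℝ) : ℂ) ^ j‖) * 2 ^ k := by
          apply mul_le_mul_of_nonneg_right hle (by positivity)
  obtain ⟨C, hC0, hC⟩ := hγC
  -- strong induction: all γ vanish
  have hγallzero : ∀ n, γ n = 0 := by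
    intro n
    induction n using Nat.strong_induction_on with
    | _ n ih =>
    -- for every t ∈ (0, 1/4], ‖γ n‖ ≤ C * 2^(n+2) * t
    have key : ∀ t : ℝ, 0 < t → t ≤ 1/4 → ‖γ n‖ ≤ C * 2 ^ (n + 2) * t := by
      intro t h0 h1
      have h1' : t < 1 := by linarith
      have h2t : 2 * t ≤ 1/2 := by linarith
      have h2t0 : (0:ℝ) ≤ 2 * t := by linarith
      -- the full series vanishes
      have hzero := hγzero t h0 h1'
      have hsum := hγsum t h0 h1'
      -- split off the first n terms, which vanish by induction
      have hsplit := Summable.sum_add_tsum_nat_add (f := fun k => γ k * (t : ℂ) ^ k) n hsum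
      rw [Finset.sum_eq_zero (fun k hk => by
        rw [ih k (Finset.mem_range.1 hk)]; ring), zero_add, hzero] at hsplit
      -- pull out t^n
      have hfac : ∀ k : ℕ, γ (k + n) * (t : ℂ) ^ (k + n)
          = (t : ℂ) ^ n * (γ (k + n) * (t : ℂ) ^ k) := by
        intro k; rw [pow_add]; ring
      rw [show (fun k => γ (k + n) * (t : ℂ) ^ (k + n))
          = fun k => (t : ℂ) ^ n * (γ (k + n) * (t : ℂ) ^ k) from funext hfac,
        tsum_mul_left] at hsplit
      have htn : ((t : ℂ)) ^ n ≠ 0 := pow_ne_zero _ (by exact_mod_cast h0.ne')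
      have hT : (∑' k, γ (k + n) * (t : ℂ) ^ k) = 0 :=
        (mul_eq_zero.1 hsplit).resolve_left htn
      -- summability of the shifted series
      have htnorm : ‖(t : ℂ)‖ = t := by
        rw [Complex.norm_real, Real.norm_of_nonneg h0.le]
      have hnormval : ∀ j k : ℕ, ‖γ j * (t : ℂ) ^ k‖ = ‖γ j‖ * t ^ k := by
        intro j k; rw [norm_mul, norm_pow, htnorm]
      have h2t1 : 2 * t < 1 := by linarith
      have hgeo : Summable (fun k : ℕ => (C * 2 ^ n) * (2 * t) ^ k) :=
        (summable_geometric_of_lt_one h2t0 h2t1).mul_left _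
      have hbound : ∀ k : ℕ, ‖γ (k + n) * (t : ℂ) ^ k‖ ≤ (C * 2 ^ n) * (2 * t) ^ k := by
        intro k
        rw [hnormval]
        calc ‖γ (k + n)‖ * t ^ k ≤ (C * 2 ^ (k + n)) * t ^ k :=
            mul_le_mul_of_nonneg_right (hC (k + n)) (by positivity)
          _ = (C * 2 ^ n) * (2 * t) ^ k := by rw [pow_add, mul_pow]; ring
      have hTs : Summable (fun k => γ (k + n) * (t : ℂ) ^ k) :=
        Summable.of_norm (Summable.of_nonneg_of_le (fun k => norm_nonneg _) hbound hgeo)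
      -- split off the first term
      have hsplit1 := Summable.sum_add_tsum_nat_add (f := fun k => γ (k + n) * (t : ℂ) ^ k) 1 hTs
      rw [hT, Finset.sum_range_one] at hsplit1
      simp only [zero_add, pow_zero, mul_one] at hsplit1
      -- hsplit1 : γ n + ∑' k, γ (k + 1 + n) * t ^ (k + 1) = 0
      have hγn : γ n = -∑' k, γ (k + 1 + n) * (t : ℂ) ^ (k + 1) := by
        linear_combination hsplit1
      have hbound2 : ∀ k : ℕ, ‖γ (k + 1 + n) * (t : ℂ) ^ (k + 1)‖ ≤
          (C * 2 ^ (n + 1) * t) * (2 * t) ^ k := by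
        intro k
        rw [hnormval]
        calc ‖γ (k + 1 + n)‖ * t ^ (k + 1) ≤ (C * 2 ^ (k + 1 + n)) * t ^ (k + 1) :=
            mul_le_mul_of_nonneg_right (hC (k + 1 + n)) (by positivity)
          _ = (C * 2 ^ (n + 1) * t) * (2 * t) ^ k := by
              rw [pow_add, pow_add, mul_pow, pow_succ]; ring
      have hgeo2 : Summable (fun k : ℕ => (C * 2 ^ (n + 1) * t) * (2 * t) ^ k) :=
        (summable_geometric_of_lt_one h2t0 h2t1).mul_left _
      have hsn2 : Summable (fun k => ‖γ (k + 1 + n) * (t : ℂ) ^ (k + 1)‖) :=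
        Summable.of_nonneg_of_le (fun k => norm_nonneg _) hbound2 hgeo2
      have hfin : ‖γ n‖ ≤ (C * 2 ^ (n + 1) * t) * (1 - 2 * t)⁻¹ := by
        rw [hγn, norm_neg]
        calc ‖∑' k, γ (k + 1 + n) * (t : ℂ) ^ (k + 1)‖
            ≤ ∑' k, ‖γ (k + 1 + n) * (t : ℂ) ^ (k + 1)‖ := norm_tsum_le_tsum_norm hsn2
          _ ≤ ∑' k, (C * 2 ^ (n + 1) * t) * (2 * t) ^ k :=
              Summable.tsum_le_tsum hbound2 hsn2 hgeo2
          _ = (C * 2 ^ (n + 1) * t) * (1 - 2 * t)⁻¹ := by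
              rw [tsum_mul_left, tsum_geometric_of_lt_one h2t0 h2t1]
      have hinv : (1 - 2 * t)⁻¹ ≤ 2 := by
        rw [inv_le_comm₀ (by linarith) (by norm_num)]
        linarith
      calc ‖γ n‖ ≤ (C * 2 ^ (n + 1) * t) * (1 - 2 * t)⁻¹ := hfin
        _ ≤ (C * 2 ^ (n + 1) * t) * 2 :=
            mul_le_mul_of_nonneg_left hinv (by positivity)
        _ = C * 2 ^ (n + 2) * t := by ring
    -- conclude γ n = 0
    by_contra hne
    have hpos : 0 < ‖γ n‖ := norm_pos_iff.2 hne
    set K : ℝ := C * 2 ^ (n + 2) with hK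
    have hK0 : 0 ≤ K := by positivity
    set t : ℝ := min (1/4) (‖γ n‖ / (2 * (K + 1))) with htdef
    have ht0 : 0 < t := lt_min (by norm_num) (by positivity)
    have ht14 : t ≤ 1/4 := min_le_left _ _
    have hkey := key t ht0 ht14
    have ht2 : t ≤ ‖γ n‖ / (2 * (K + 1)) := min_le_right _ _
    have : K * t ≤ K * (‖γ n‖ / (2 * (K + 1))) := mul_le_mul_of_nonneg_left ht2 hK0
    have hlt : K * (‖γ n‖ / (2 * (K + 1))) < ‖γ n‖ := by
      rw [div_eq_mul_inv]
      have h1 : 0 < K + 1 := by linarith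
      rw [mul_comm (2 : ℝ) (K + 1), mul_inv]
      have : K * (‖γ n‖ * ((K + 1)⁻¹ * 2⁻¹)) = (K / (K + 1)) * (‖γ n‖ / 2) := by
        field_simp
      rw [this]
      have hfrac : K / (K + 1) ≤ 1 := by
        rw [div_le_one h1]; linarith
      calc (K / (K + 1)) * (‖γ n‖ / 2) ≤ 1 * (‖γ n‖ / 2) :=
          mul_le_mul_of_nonneg_right hfrac (by positivity)
        _ < ‖γ n‖ := by linarith
    linarith
  intro n
  have h1 := hγallzero n
  simp only [hγ, sub_eq_zero] at h1
  have h2 : α n = (sp_b n : ℝ) := by exact_mod_cast h1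
  have := sp_one_le_b n
  rw [h2]
  have : (1:ℝ) ≤ (sp_b n : ℝ) := by exact_mod_cast this
  linarith
end
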